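/- arXiv:1305.6903 — 4 statements merged into one kernel-verified Lean document; each statement's English description precedes it below -/
import Mathlib

section
/- Let W and V be Banach spaces, T₁ < T₂, and let 1/2 < β < β′ < 1 and α satisfy 1 − β′ < α < β. Let Z : [T₁,T₂] → W be β-Hölder continuous and let ω : [T₁,T₂] → V be β′-Hölder continuous. Then the function r ↦ ‖D^α_{T₁+}Z[r]‖ · |D^{1−α}_{T₂−}ω_{T₂−}[r]| is integrable on (T₁,T₂), and for every T > 0 there exists a constant c > 0, depending only on α, β, β′ and T, such that whenever T₂ − T₁ ≤ T one has ∫_{T₁}^{T₂} ‖D^α_{T₁+}Z[r]‖ · |D^{1−α}_{T₂−}ω_{T₂−}[r]| dr ≤ c ‖Z‖_{β,T₁,T₂} |||ω|||_{β′,T₁,T₂} (T₂ − T₁)^{β′}. (This gives the bound |∫_{T₁}^{T₂} Z dω| ≤ c ‖Z‖_β |||ω|||_{β′,T₁,T₂} (T₂−T₁)^{β′} for the pathwise integral defined through these fractional derivatives.) -/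
open Set MeasureTheory

/-- The left-sided Weyl fractional derivative
`D^α_{T₁+}Z[r] = (1/Γ(1−α)) ( Z(r)/(r−T₁)^α + α ∫_{T₁}^r (Z(r)−Z(q))/(r−q)^{1+α} dq )`. -/
noncomputable def fracDerivLeft {W : Type*} [NormedAddCommGroup W] [NormedSpace ℝ W]
    (α T₁ : ℝ) (Z : ℝ → W) (r : ℝ) : W :=
  (1 / Real.Gamma (1 - α)) •
    (((r - T₁) ^ (-α)) • Z r +
      α • ∫ q in T₁..r, ((r - q) ^ (-(1 + α))) • (Z r - Z q))

/-- The right-sided Weyl fractional derivative (up to the unimodular factor `(−1)^{1−α}`)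
`D^{1−α}_{T₂−}ω_{T₂−}[r] = (1/Γ(α)) ( (ω(r)−ω(T₂))/(T₂−r)^{1−α}
  + (1−α) ∫_r^{T₂} (ω(r)−ω(q))/(q−r)^{2−α} dq )`. -/
noncomputable def fracDerivRight {V : Type*} [NormedAddCommGroup V] [NormedSpace ℝ V]
    (α T₂ : ℝ) (ω : ℝ → V) (r : ℝ) : V :=
  (1 / Real.Gamma α) •
    (((T₂ - r) ^ (-(1 - α))) • (ω r - ω T₂) +
      (1 - α) • ∫ q in r..T₂, ((q - r) ^ (-(2 - α))) • (ω r - ω q))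

/-! ### Auxiliary integral computations -/

open intervalIntegral in
lemma intervalIntegrable_rpow_sub_left {e T₁ r : ℝ} (he : -1 < e) :
    IntervalIntegrable (fun q => (r - q) ^ e) volume T₁ r := by
  have h := (intervalIntegrable_rpow' (a := r - T₁) (b := 0) he).comp_sub_left r
  simpa using h

open intervalIntegral in
lemma intervalIntegrable_rpow_sub_right {e r T₂ : ℝ} (he : -1 < e) :
    IntervalIntegrable (fun q => (q - r) ^ e) volume r T₂ := by
  have h := (intervalIntegrable_rpow' (a := 0) (b := T₂ - r) he).comp_sub_right r
  simpa using h

open intervalIntegral in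
lemma integral_rpow_sub_left {e T₁ r : ℝ} (he : -1 < e) :
    (∫ q in T₁..r, (r - q) ^ e) = (r - T₁) ^ (e + 1) / (e + 1) := by
  rw [intervalIntegral.integral_comp_sub_left (fun x => x ^ e) r]
  rw [integral_rpow (Or.inl he)]
  rw [sub_self, Real.zero_rpow (by linarith)]
  ring

open intervalIntegral in
lemma integral_rpow_sub_right {e r T₂ : ℝ} (he : -1 < e) :
    (∫ q in r..T₂, (q - r) ^ e) = (T₂ - r) ^ (e + 1) / (e + 1) := by
  rw [intervalIntegral.integral_comp_sub_right (fun x => x ^ e) r]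
  rw [integral_rpow (Or.inl he)]
  rw [sub_self, Real.zero_rpow (by linarith)]
  ring

/-! ### Continuity from a Hölder estimate, and clamping -/

lemma holder_continuousOn {W : Type*} [NormedAddCommGroup W] {β K T₁ T₂ : ℝ}
    (hβ : 0 < β)
    {Z : ℝ → W} (hZ : ∀ s t : ℝ, T₁ ≤ s → s ≤ t → t ≤ T₂ → ‖Z t - Z s‖ ≤ K * (t - s) ^ β) :
    ContinuousOn Z (Icc T₁ T₂) := by
  intro x hx
  have key : ∀ t ∈ Icc T₁ T₂, dist (Z t) (Z x) ≤ K * |t - x| ^ β := by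
    intro t ht
    rcases le_total t x with h | h
    · rw [dist_comm, dist_eq_norm]
      have := hZ t x ht.1 h hx.2
      rwa [abs_of_nonpos (by linarith), neg_sub]
    · rw [dist_eq_norm]
      have := hZ x t hx.1 h ht.2
      rwa [abs_of_nonneg (by linarith)]
  have hcont : ContinuousAt (fun t => K * |t - x| ^ β) x := by
    have h1 : ContinuousAt (fun t : ℝ => |t - x|) x :=
      (continuous_abs.comp (continuous_id.sub continuous_const)).continuousAt
    exact continuousAt_const.mul
      ((Real.continuousAt_rpow_const _ _ (Or.inr hβ.le)).comp h1)
  have hlim : Filter.Tendsto (fun t => K * |t - x| ^ β) (nhdsWithin x (Icc T₁ T₂)) (nhds 0) := by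
    have := (hcont.continuousWithinAt (s := Icc T₁ T₂)).tendsto
    simpa [sub_self, abs_zero, Real.zero_rpow hβ.ne'] using this
  rw [ContinuousWithinAt, tendsto_iff_dist_tendsto_zero]
  apply squeeze_zero' ?_ ?_ hlim
  · exact Filter.Eventually.of_forall fun t => dist_nonneg
  · exact Filter.eventually_of_mem self_mem_nhdsWithin key

noncomputable def clampFn {W : Type*} (T₁ T₂ : ℝ) (Z : ℝ → W) : ℝ → W :=
  fun s => Z (max T₁ (min s T₂))

lemma clampFn_continuous {W : Type*} [TopologicalSpace W] {T₁ T₂ : ℝ} (h : T₁ ≤ T₂) {Z : ℝ → W}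
    (hZ : ContinuousOn Z (Icc T₁ T₂)) : Continuous (clampFn T₁ T₂ Z) := by
  apply hZ.comp_continuous
  · exact continuous_const.max (continuous_id.min continuous_const)
  · intro s
    exact ⟨le_max_left _ _, max_le h (min_le_right _ _)⟩

lemma clampFn_eq {W : Type*} {T₁ T₂ : ℝ} (Z : ℝ → W) {s : ℝ} (hs : s ∈ Icc T₁ T₂) :
    clampFn T₁ T₂ Z s = Z s := by
  unfold clampFn
  rw [min_eq_left hs.2, max_eq_right hs.1]

/-! ### Pointwise norm bounds for the fractional derivatives -/

lemma fracDerivLeft_norm_le {W : Type*} [NormedAddCommGroup W] [NormedSpace ℝ W]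
    {α β T T₁ T₂ : ℝ}
    (hα0 : 0 < α) (hα1 : α < 1) (hαβ : α < β) (hβ1 : β ≤ 1) (hTT : T₂ - T₁ ≤ T)
    {Z : ℝ → W} {MZ KZ : ℝ} (hMZ0 : 0 ≤ MZ) (hKZ0 : 0 ≤ KZ)
    (hM : ∀ s ∈ Icc T₁ T₂, ‖Z s‖ ≤ MZ)
    (hZ : ∀ s t : ℝ, T₁ ≤ s → s ≤ t → t ≤ T₂ → ‖Z t - Z s‖ ≤ KZ * (t - s) ^ β)
    {r : ℝ} (hr : r ∈ Ioc T₁ T₂) :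
    ‖fracDerivLeft α T₁ Z r‖ ≤
      (1 / Real.Gamma (1 - α)) * (1 + α * T ^ β / (β - α)) * (MZ + KZ) * (r - T₁) ^ (-α) := by
  have hrT : 0 < r - T₁ := sub_pos.2 hr.1
  have hβα : 0 < β - α := sub_pos.2 hαβ
  have hΓ : 0 < Real.Gamma (1 - α) := Real.Gamma_pos_of_pos (by linarith)
  have hTpos : 0 < T := by have := hr.2; linarith
  set e : ℝ := β - α - 1 with he
  have he1 : (-1 : ℝ) < e := by rw [he]; linarith
  have he0 : e ≠ 0 := by rw [he]; nlinarith
  -- bound on the inner integral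
  have hbound : ‖∫ q in T₁..r, ((r - q) ^ (-(1 + α))) • (Z r - Z q)‖
      ≤ KZ * ((r - T₁) ^ (β - α) / (β - α)) := by
    have hInt : IntervalIntegrable (fun q => KZ * (r - q) ^ e) volume T₁ r :=
      (intervalIntegrable_rpow_sub_left he1).const_mul KZ
    have hae : ∀ᵐ q ∂(volume.restrict (Set.uIoc T₁ r)),
        ‖((r - q) ^ (-(1 + α))) • (Z r - Z q)‖ ≤ KZ * (r - q) ^ e := by
      rw [uIoc_of_le hr.1.le]
      refine (ae_restrict_iff' measurableSet_Ioc).2 (Filter.Eventually.of_forall fun q hq => ?_)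
      rcases eq_or_lt_of_le hq.2 with hqr | hqr
      · rw [hqr]
        simp [Real.zero_rpow he0]
      · have hrq : 0 < r - q := sub_pos.2 hqr
        rw [norm_smul, Real.norm_eq_abs, abs_of_nonneg (Real.rpow_nonneg hrq.le _)]
        calc (r - q) ^ (-(1 + α)) * ‖Z r - Z q‖
            ≤ (r - q) ^ (-(1 + α)) * (KZ * (r - q) ^ β) := by
              apply mul_le_mul_of_nonneg_left _ (Real.rpow_nonneg hrq.le _)
              exact hZ q r hq.1.le hqr.le hr.2
          _ = KZ * (r - q) ^ e := by
              rw [mul_comm ((r - q) ^ (-(1 + α))) _, mul_assoc, ← Real.rpow_add hrq]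
              congr 2
              rw [he]; ring
    have h := intervalIntegral.norm_integral_le_abs_of_norm_le hae hInt
    rw [intervalIntegral.integral_const_mul, integral_rpow_sub_left he1] at h
    have hval : e + 1 = β - α := by rw [he]; ring
    rw [hval] at h
    rwa [abs_of_nonneg (by positivity)] at h
  -- assemble
  have h1 : ‖((r - T₁) ^ (-α)) • Z r‖ ≤ (r - T₁) ^ (-α) * MZ := by
    rw [norm_smul, Real.norm_eq_abs, abs_of_nonneg (Real.rpow_nonneg hrT.le _)]
    exact mul_le_mul_of_nonneg_left (hM r ⟨hr.1.le, hr.2⟩) (Real.rpow_nonneg hrT.le _)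
  have h2 : ‖α • ∫ q in T₁..r, ((r - q) ^ (-(1 + α))) • (Z r - Z q)‖
      ≤ α * (KZ * ((r - T₁) ^ (β - α) / (β - α))) := by
    rw [norm_smul, Real.norm_eq_abs, abs_of_pos hα0]
    exact mul_le_mul_of_nonneg_left hbound hα0.le
  have hmain : ‖fracDerivLeft α T₁ Z r‖ ≤
      (1 / Real.Gamma (1 - α)) *
        ((r - T₁) ^ (-α) * MZ + α * (KZ * ((r - T₁) ^ (β - α) / (β - α)))) := by
    rw [fracDerivLeft, norm_smul, Real.norm_eq_abs, abs_of_pos (by positivity)]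
    apply mul_le_mul_of_nonneg_left _ (by positivity)
    exact (norm_add_le _ _).trans (add_le_add h1 h2)
  refine hmain.trans ?_
  have hX : (0:ℝ) ≤ (r - T₁) ^ (-α) := Real.rpow_nonneg hrT.le _
  have hTβ : (0:ℝ) ≤ T ^ β := Real.rpow_nonneg hTpos.le _
  have hx : (r - T₁) ^ (β - α) ≤ T ^ β * (r - T₁) ^ (-α) := by
    rw [show β - α = β + (-α) by ring, Real.rpow_add hrT]
    exact mul_le_mul_of_nonneg_right
      (Real.rpow_le_rpow hrT.le (by linarith [hr.2]) (by linarith))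
      (Real.rpow_nonneg hrT.le _)
  have key : (r - T₁) ^ (-α) * MZ + α * (KZ * ((r - T₁) ^ (β - α) / (β - α)))
      ≤ (1 + α * T ^ β / (β - α)) * ((MZ + KZ) * (r - T₁) ^ (-α)) := by
    have hle : α * (KZ * ((r - T₁) ^ (β - α) / (β - α)))
        ≤ α * (KZ * ((T ^ β * (r - T₁) ^ (-α)) / (β - α))) := by gcongr
    refine (add_le_add (le_refl _) hle).trans ?_
    have h1' : 0 ≤ KZ * (r - T₁) ^ (-α) := mul_nonneg hKZ0 hX
    have h2' : 0 ≤ α * (T ^ β * (MZ * (r - T₁) ^ (-α))) / (β - α) := by positivity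
    have hexp : (1 + α * T ^ β / (β - α)) * ((MZ + KZ) * (r - T₁) ^ (-α))
        = MZ * (r - T₁) ^ (-α) + KZ * (r - T₁) ^ (-α)
          + α * (T ^ β * (MZ * (r - T₁) ^ (-α))) / (β - α)
          + α * (KZ * ((T ^ β * (r - T₁) ^ (-α)) / (β - α))) := by ring
    rw [hexp]
    linarith
  calc (1 / Real.Gamma (1 - α)) *
        ((r - T₁) ^ (-α) * MZ + α * (KZ * ((r - T₁) ^ (β - α) / (β - α))))
      ≤ (1 / Real.Gamma (1 - α)) *
        ((1 + α * T ^ β / (β - α)) * ((MZ + KZ) * (r - T₁) ^ (-α))) :=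
        mul_le_mul_of_nonneg_left key (by positivity)
    _ = (1 / Real.Gamma (1 - α)) * (1 + α * T ^ β / (β - α)) * (MZ + KZ) * (r - T₁) ^ (-α) := by
        ring

lemma fracDerivRight_norm_le {V : Type*} [NormedAddCommGroup V] [NormedSpace ℝ V]
    {α β' T₁ T₂ : ℝ}
    (hα0 : 0 < α) (hα1 : α < 1) (hsum : 1 < β' + α)
    {ω : ℝ → V} {Kω : ℝ} (hKω0 : 0 ≤ Kω)
    (hω : ∀ s t : ℝ, T₁ ≤ s → s ≤ t → t ≤ T₂ → ‖ω t - ω s‖ ≤ Kω * (t - s) ^ β')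
    {r : ℝ} (hr : r ∈ Ico T₁ T₂) :
    ‖fracDerivRight α T₂ ω r‖ ≤
      (1 / Real.Gamma α) * (1 + (1 - α) / (β' + α - 1)) * Kω * (T₂ - r) ^ (β' + α - 1) := by
  have hrT : 0 < T₂ - r := sub_pos.2 hr.2
  have hba : 0 < β' + α - 1 := by linarith
  have hΓ : 0 < Real.Gamma α := Real.Gamma_pos_of_pos hα0
  set e : ℝ := β' + α - 2 with he
  have he1 : (-1 : ℝ) < e := by rw [he]; linarith
  have hbound : ‖∫ q in r..T₂, ((q - r) ^ (-(2 - α))) • (ω r - ω q)‖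
      ≤ Kω * ((T₂ - r) ^ (β' + α - 1) / (β' + α - 1)) := by
    have hInt : IntervalIntegrable (fun q => Kω * (q - r) ^ e) volume r T₂ :=
      (intervalIntegrable_rpow_sub_right he1).const_mul Kω
    have hae : ∀ᵐ q ∂(volume.restrict (Set.uIoc r T₂)),
        ‖((q - r) ^ (-(2 - α))) • (ω r - ω q)‖ ≤ Kω * (q - r) ^ e := by
      rw [uIoc_of_le hr.2.le]
      refine (ae_restrict_iff' measurableSet_Ioc).2 (Filter.Eventually.of_forall fun q hq => ?_)
      have hqr : 0 < q - r := sub_pos.2 hq.1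
      rw [norm_smul, Real.norm_eq_abs, abs_of_nonneg (Real.rpow_nonneg hqr.le _)]
      calc (q - r) ^ (-(2 - α)) * ‖ω r - ω q‖
          ≤ (q - r) ^ (-(2 - α)) * (Kω * (q - r) ^ β') := by
            apply mul_le_mul_of_nonneg_left _ (Real.rpow_nonneg hqr.le _)
            rw [norm_sub_rev]
            exact hω r q hr.1 hq.1.le hq.2
        _ = Kω * (q - r) ^ e := by
            rw [mul_comm ((q - r) ^ (-(2 - α))) _, mul_assoc, ← Real.rpow_add hqr]
            congr 2
            rw [he]; ring
    have h := intervalIntegral.norm_integral_le_abs_of_norm_le hae hInt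
    rw [intervalIntegral.integral_const_mul, integral_rpow_sub_right he1] at h
    have hval : e + 1 = β' + α - 1 := by rw [he]; ring
    rw [hval] at h
    rwa [abs_of_nonneg (by positivity)] at h
  have h1 : ‖((T₂ - r) ^ (-(1 - α))) • (ω r - ω T₂)‖ ≤ Kω * (T₂ - r) ^ (β' + α - 1) := by
    rw [norm_smul, Real.norm_eq_abs, abs_of_nonneg (Real.rpow_nonneg hrT.le _)]
    calc (T₂ - r) ^ (-(1 - α)) * ‖ω r - ω T₂‖
        ≤ (T₂ - r) ^ (-(1 - α)) * (Kω * (T₂ - r) ^ β') := by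
          apply mul_le_mul_of_nonneg_left _ (Real.rpow_nonneg hrT.le _)
          rw [norm_sub_rev]
          exact hω r T₂ hr.1 hr.2.le le_rfl
      _ = Kω * (T₂ - r) ^ (β' + α - 1) := by
          rw [mul_comm ((T₂ - r) ^ (-(1 - α))) _, mul_assoc, ← Real.rpow_add hrT]
          congr 2
          ring
  have h2 : ‖(1 - α) • ∫ q in r..T₂, ((q - r) ^ (-(2 - α))) • (ω r - ω q)‖
      ≤ (1 - α) * (Kω * ((T₂ - r) ^ (β' + α - 1) / (β' + α - 1))) := by
    rw [norm_smul, Real.norm_eq_abs, abs_of_pos (by linarith)]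
    exact mul_le_mul_of_nonneg_left hbound (by linarith)
  have hmain : ‖fracDerivRight α T₂ ω r‖ ≤
      (1 / Real.Gamma α) *
        (Kω * (T₂ - r) ^ (β' + α - 1)
          + (1 - α) * (Kω * ((T₂ - r) ^ (β' + α - 1) / (β' + α - 1)))) := by
    rw [fracDerivRight, norm_smul, Real.norm_eq_abs, abs_of_pos (by positivity)]
    apply mul_le_mul_of_nonneg_left _ (by positivity)
    exact (norm_add_le _ _).trans (add_le_add h1 h2)
  refine hmain.trans (le_of_eq ?_)
  field_simp

/-! ### Measurability of the fractional derivatives -/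

lemma fracDerivLeft_aestronglyMeasurable {W : Type*} [NormedAddCommGroup W] [NormedSpace ℝ W]
    {α T₁ T₂ : ℝ} (hT : T₁ < T₂) {Z : ℝ → W}
    (hZc : ContinuousOn Z (Icc T₁ T₂)) :
    AEStronglyMeasurable (fun r => fracDerivLeft α T₁ Z r) (volume.restrict (Ioo T₁ T₂)) := by
  set Z' := clampFn T₁ T₂ Z with hZ'
  have hZ'c : Continuous Z' := clampFn_continuous hT.le hZc
  set S : Set (ℝ × ℝ) := {p | T₁ < p.2 ∧ p.2 < p.1} with hS
  have hSm : MeasurableSet S :=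
    (measurableSet_lt measurable_const measurable_snd).inter
      (measurableSet_lt measurable_snd measurable_fst)
  set h : ℝ × ℝ → W := fun p =>
    Real.exp (Real.log (p.1 - p.2) * (-(1 + α))) • (Z' p.1 - Z' p.2) with hh
  have hhm : StronglyMeasurable (S.indicator h) := by
    apply StronglyMeasurable.indicator _ hSm
    apply StronglyMeasurable.smul
    · exact (((measurable_fst.sub measurable_snd).log.mul_const _).exp).stronglyMeasurable
    · exact ((hZ'c.comp continuous_fst).sub (hZ'c.comp continuous_snd)).stronglyMeasurable
  have hF : StronglyMeasurable (fun r => ∫ q, S.indicator h (r, q)) := hhm.integral_prod_right'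
  set G : ℝ → W := fun r =>
    (1 / Real.Gamma (1 - α)) •
      ((Real.exp (Real.log (r - T₁) * (-α))) • Z' r + α • ∫ q, S.indicator h (r, q)) with hG
  have hGm : StronglyMeasurable G := by
    apply StronglyMeasurable.const_smul
    apply StronglyMeasurable.add
    · exact StronglyMeasurable.smul
        (((measurable_id.sub_const T₁).log.mul_const _).exp).stronglyMeasurable
        hZ'c.stronglyMeasurable
    · exact hF.const_smul α
  apply hGm.aestronglyMeasurable.congr
  refine (ae_restrict_iff' measurableSet_Ioo).2 (Filter.Eventually.of_forall fun r hr => ?_)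
  have hrT : 0 < r - T₁ := sub_pos.2 hr.1
  have hint_eq : (∫ q in T₁..r, ((r - q) ^ (-(1 + α))) • (Z r - Z q))
      = ∫ q, S.indicator h (r, q) := by
    rw [intervalIntegral.integral_of_le hr.1.le, integral_Ioc_eq_integral_Ioo,
      ← integral_indicator measurableSet_Ioo]
    congr 1
    funext q
    by_cases hq : q ∈ Ioo T₁ r
    · rw [Set.indicator_of_mem hq, Set.indicator_of_mem (show (r, q) ∈ S from ⟨hq.1, hq.2⟩)]
      have hq2 : 0 < r - q := sub_pos.2 hq.2
      rw [hh]
      dsimp only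
      rw [Real.rpow_def_of_pos hq2, hZ',
        clampFn_eq Z ⟨hr.1.le, hr.2.le⟩,
        clampFn_eq Z ⟨hq.1.le, hq.2.le.trans hr.2.le⟩]
    · rw [Set.indicator_of_notMem hq,
        Set.indicator_of_notMem (fun hc => hq ⟨hc.1, hc.2⟩)]
  show G r = fracDerivLeft α T₁ Z r
  rw [hG, fracDerivLeft, hint_eq]
  dsimp only
  rw [Real.rpow_def_of_pos hrT, hZ', clampFn_eq Z ⟨hr.1.le, hr.2.le⟩]

lemma fracDerivRight_aestronglyMeasurable {V : Type*} [NormedAddCommGroup V] [NormedSpace ℝ V]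
    {α T₁ T₂ : ℝ} (hT : T₁ < T₂) {ω : ℝ → V}
    (hωc : ContinuousOn ω (Icc T₁ T₂)) :
    AEStronglyMeasurable (fun r => fracDerivRight α T₂ ω r) (volume.restrict (Ioo T₁ T₂)) := by
  set ω' := clampFn T₁ T₂ ω with hω'
  have hω'c : Continuous ω' := clampFn_continuous hT.le hωc
  set S : Set (ℝ × ℝ) := {p | p.1 < p.2 ∧ p.2 < T₂} with hS
  have hSm : MeasurableSet S :=
    (measurableSet_lt measurable_fst measurable_snd).inter
      (measurableSet_lt measurable_snd measurable_const)
  set h : ℝ × ℝ → V := fun p =>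
    Real.exp (Real.log (p.2 - p.1) * (-(2 - α))) • (ω' p.1 - ω' p.2) with hh
  have hhm : StronglyMeasurable (S.indicator h) := by
    apply StronglyMeasurable.indicator _ hSm
    apply StronglyMeasurable.smul
    · exact (((measurable_snd.sub measurable_fst).log.mul_const _).exp).stronglyMeasurable
    · exact ((hω'c.comp continuous_fst).sub (hω'c.comp continuous_snd)).stronglyMeasurable
  have hF : StronglyMeasurable (fun r => ∫ q, S.indicator h (r, q)) := hhm.integral_prod_right'
  set G : ℝ → V := fun r =>
    (1 / Real.Gamma α) •
      ((Real.exp (Real.log (T₂ - r) * (-(1 - α)))) • (ω' r - ω T₂)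
        + (1 - α) • ∫ q, S.indicator h (r, q)) with hG
  have hGm : StronglyMeasurable G := by
    apply StronglyMeasurable.const_smul
    apply StronglyMeasurable.add
    · exact StronglyMeasurable.smul
        ((((measurable_const.sub measurable_id).log.mul_const _).exp)).stronglyMeasurable
        (hω'c.sub continuous_const).stronglyMeasurable
    · exact hF.const_smul _
  apply hGm.aestronglyMeasurable.congr
  refine (ae_restrict_iff' measurableSet_Ioo).2 (Filter.Eventually.of_forall fun r hr => ?_)
  have hrT : 0 < T₂ - r := sub_pos.2 hr.2
  have hint_eq : (∫ q in r..T₂, ((q - r) ^ (-(2 - α))) • (ω r - ω q))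
      = ∫ q, S.indicator h (r, q) := by
    rw [intervalIntegral.integral_of_le hr.2.le, integral_Ioc_eq_integral_Ioo,
      ← integral_indicator measurableSet_Ioo]
    congr 1
    funext q
    by_cases hq : q ∈ Ioo r T₂
    · rw [Set.indicator_of_mem hq, Set.indicator_of_mem (show (r, q) ∈ S from ⟨hq.1, hq.2⟩)]
      have hq2 : 0 < q - r := sub_pos.2 hq.1
      rw [hh]
      dsimp only
      rw [Real.rpow_def_of_pos hq2, hω',
        clampFn_eq ω ⟨hr.1.le, hr.2.le⟩,
        clampFn_eq ω ⟨hr.1.le.trans hq.1.le, hq.2.le⟩]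
    · rw [Set.indicator_of_notMem hq,
        Set.indicator_of_notMem (fun hc => hq ⟨hc.1, hc.2⟩)]
  show G r = fracDerivRight α T₂ ω r
  rw [hG, fracDerivRight, hint_eq]
  dsimp only
  rw [Real.rpow_def_of_pos hrT, hω', clampFn_eq ω ⟨hr.1.le, hr.2.le⟩]

/-- If `Z` is `β`-Hölder continuous (with sup bound `MZ` and Hölder constant `KZ`) and
`ω` is `β′`-Hölder continuous (with Hölder constant `Kω`), `1/2 < β < β′ < 1` and
`1 − β′ < α < β`, then `r ↦ ‖D^α_{T₁+}Z[r]‖·|D^{1−α}_{T₂−}ω_{T₂−}[r]|` is integrable on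
`(T₁,T₂)` and, for a constant `c = c(α,β,β′,T) > 0`, whenever `T₂ − T₁ ≤ T`,
`∫_{T₁}^{T₂} ‖D^α_{T₁+}Z[r]‖·|D^{1−α}_{T₂−}ω_{T₂−}[r]| dr
  ≤ c ‖Z‖_{β} |||ω|||_{β′} (T₂−T₁)^{β′}`. -/
theorem fracDeriv_product_integrable_and_bound
    {V W : Type*} [NormedAddCommGroup V] [NormedSpace ℝ V] [CompleteSpace V]
    [NormedAddCommGroup W] [NormedSpace ℝ W] [CompleteSpace W]
    {α β β' T : ℝ} (hβ : 1 / 2 < β) (hββ' : β < β') (hβ'1 : β' < 1)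
    (hα1 : 1 - β' < α) (hα2 : α < β) (hT : 0 < T) :
    ∃ c > 0, ∀ T₁ T₂ : ℝ, T₁ < T₂ → T₂ - T₁ ≤ T →
      ∀ (Z : ℝ → W) (ω : ℝ → V) (MZ KZ Kω : ℝ),
        (∀ s ∈ Icc T₁ T₂, ‖Z s‖ ≤ MZ) →
        (∀ s t : ℝ, T₁ ≤ s → s ≤ t → t ≤ T₂ → ‖Z t - Z s‖ ≤ KZ * (t - s) ^ β) →
        (∀ s t : ℝ, T₁ ≤ s → s ≤ t → t ≤ T₂ → ‖ω t - ω s‖ ≤ Kω * (t - s) ^ β') →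
        IntegrableOn
          (fun r => ‖fracDerivLeft α T₁ Z r‖ * ‖fracDerivRight α T₂ ω r‖)
          (Ioo T₁ T₂) ∧
        (∫ r in T₁..T₂, ‖fracDerivLeft α T₁ Z r‖ * ‖fracDerivRight α T₂ ω r‖) ≤
          c * (MZ + KZ) * Kω * (T₂ - T₁) ^ β' := by
  have hβ'0 : 0 < β' := by linarith
  have hα0 : 0 < α := by linarith
  have hα1' : α < 1 := by linarith
  have hβα : 0 < β - α := by linarith
  have hsum : 1 < β' + α := by linarith
  have hβ0 : 0 < β := by linarith
  have hba : 0 < β' + α - 1 := by linarith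
  have hΓ1 : 0 < Real.Gamma (1 - α) := Real.Gamma_pos_of_pos (by linarith)
  have hΓ2 : 0 < Real.Gamma α := Real.Gamma_pos_of_pos hα0
  have hCL0 : 0 < (1 / Real.Gamma (1 - α)) * (1 + α * T ^ β / (β - α)) := by
    apply mul_pos (by positivity)
    have : 0 < α * T ^ β / (β - α) := by positivity
    linarith
  have hCR0 : 0 < (1 / Real.Gamma α) * (1 + (1 - α) / (β' + α - 1)) := by
    apply mul_pos (by positivity)
    have : 0 < (1 - α) / (β' + α - 1) := div_pos (by linarith) hba
    linarith
  refine ⟨(1 / Real.Gamma (1 - α)) * (1 + α * T ^ β / (β - α)) *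
      ((1 / Real.Gamma α) * (1 + (1 - α) / (β' + α - 1))) / (1 - α),
    div_pos (mul_pos hCL0 hCR0) (by linarith), ?_⟩
  intro T₁ T₂ h12 hle Z ω MZ KZ Kω hM hZ hω
  have hd : 0 < T₂ - T₁ := sub_pos.2 h12
  have hMZ0 : 0 ≤ MZ := le_trans (norm_nonneg _) (hM T₁ ⟨le_rfl, h12.le⟩)
  have hKZ0 : 0 ≤ KZ := by
    have h0 := hZ T₁ T₂ le_rfl h12.le le_rfl
    nlinarith [norm_nonneg (Z T₂ - Z T₁), Real.rpow_pos_of_pos hd β]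
  have hKω0 : 0 ≤ Kω := by
    have h0 := hω T₁ T₂ le_rfl h12.le le_rfl
    nlinarith [norm_nonneg (ω T₂ - ω T₁), Real.rpow_pos_of_pos hd β']
  have hZc : ContinuousOn Z (Icc T₁ T₂) := holder_continuousOn hβ0 hZ
  have hωc : ContinuousOn ω (Icc T₁ T₂) := holder_continuousOn hβ'0 hω
  have hmeas : AEStronglyMeasurable
      (fun r => ‖fracDerivLeft α T₁ Z r‖ * ‖fracDerivRight α T₂ ω r‖)
      (volume.restrict (Ioo T₁ T₂)) :=
    (fracDerivLeft_aestronglyMeasurable h12 hZc).norm.mul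
      (fracDerivRight_aestronglyMeasurable h12 hωc).norm
  -- the dominating function
  set D : ℝ := (1 / Real.Gamma (1 - α)) * (1 + α * T ^ β / (β - α)) * (MZ + KZ) *
      ((1 / Real.Gamma α) * (1 + (1 - α) / (β' + α - 1)) * Kω * (T₂ - T₁) ^ (β' + α - 1))
    with hD
  have hD0 : 0 ≤ D := by
    rw [hD]
    have := Real.rpow_nonneg hd.le (β' + α - 1)
    positivity
  have hptwise : ∀ r ∈ Ioo T₁ T₂,
      ‖fracDerivLeft α T₁ Z r‖ * ‖fracDerivRight α T₂ ω r‖ ≤ D * (r - T₁) ^ (-α) := by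
    intro r hr
    have hL := fracDerivLeft_norm_le hα0 hα1' hα2 (by linarith) hle hMZ0 hKZ0 hM hZ
      (r := r) ⟨hr.1, hr.2.le⟩
    have hR := fracDerivRight_norm_le hα0 hα1' hsum hKω0 hω (r := r) ⟨hr.1.le, hr.2⟩
    have hR' : ‖fracDerivRight α T₂ ω r‖ ≤
        (1 / Real.Gamma α) * (1 + (1 - α) / (β' + α - 1)) * Kω * (T₂ - T₁) ^ (β' + α - 1) := by
      refine hR.trans ?_
      apply mul_le_mul_of_nonneg_left _ (by positivity)
      exact Real.rpow_le_rpow (by linarith [hr.2]) (by linarith [hr.1]) hba.le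
    calc ‖fracDerivLeft α T₁ Z r‖ * ‖fracDerivRight α T₂ ω r‖
        ≤ ((1 / Real.Gamma (1 - α)) * (1 + α * T ^ β / (β - α)) * (MZ + KZ) * (r - T₁) ^ (-α)) *
          ((1 / Real.Gamma α) * (1 + (1 - α) / (β' + α - 1)) * Kω * (T₂ - T₁) ^ (β' + α - 1)) := by
          apply mul_le_mul hL hR' (norm_nonneg _)
          have : (0:ℝ) ≤ (r - T₁) ^ (-α) := Real.rpow_nonneg (by linarith [hr.1]) _
          positivity
      _ = D * (r - T₁) ^ (-α) := by rw [hD]; ring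
  have hgInt : IntegrableOn (fun r => D * (r - T₁) ^ (-α)) (Ioo T₁ T₂) volume := by
    have h1 : IntervalIntegrable (fun r => (r - T₁) ^ (-α)) volume T₁ T₂ :=
      intervalIntegrable_rpow_sub_right (by linarith)
    have h2 := h1.const_mul D
    rw [intervalIntegrable_iff_integrableOn_Ioc_of_le h12.le] at h2
    exact h2.mono_set Ioo_subset_Ioc_self
  have hint : IntegrableOn
      (fun r => ‖fracDerivLeft α T₁ Z r‖ * ‖fracDerivRight α T₂ ω r‖) (Ioo T₁ T₂) := by
    apply Integrable.mono' hgInt hmeas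
    refine (ae_restrict_iff' measurableSet_Ioo).2 (Filter.Eventually.of_forall fun r hr => ?_)
    rw [Real.norm_eq_abs, abs_of_nonneg (mul_nonneg (norm_nonneg _) (norm_nonneg _))]
    exact hptwise r hr
  refine ⟨hint, ?_⟩
  have hIoo : (∫ r in T₁..T₂, ‖fracDerivLeft α T₁ Z r‖ * ‖fracDerivRight α T₂ ω r‖)
      = ∫ r in Ioo T₁ T₂, ‖fracDerivLeft α T₁ Z r‖ * ‖fracDerivRight α T₂ ω r‖ := by
    rw [intervalIntegral.integral_of_le h12.le, integral_Ioc_eq_integral_Ioo]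
  have hmono : (∫ r in Ioo T₁ T₂, ‖fracDerivLeft α T₁ Z r‖ * ‖fracDerivRight α T₂ ω r‖)
      ≤ ∫ r in Ioo T₁ T₂, D * (r - T₁) ^ (-α) :=
    setIntegral_mono_on hint hgInt measurableSet_Ioo (fun r hr => hptwise r hr)
  have hval : (∫ r in Ioo T₁ T₂, D * (r - T₁) ^ (-α))
      = D * ((T₂ - T₁) ^ (-α + 1) / (-α + 1)) := by
    rw [← integral_Ioc_eq_integral_Ioo, ← intervalIntegral.integral_of_le h12.le,
      intervalIntegral.integral_const_mul, integral_rpow_sub_right (by linarith)]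
  have hpow : (T₂ - T₁) ^ (β' + α - 1) * (T₂ - T₁) ^ (-α + 1) = (T₂ - T₁) ^ β' := by
    rw [← Real.rpow_add hd]
    congr 1
    ring
  have hfinal : D * ((T₂ - T₁) ^ (-α + 1) / (-α + 1))
      = (1 / Real.Gamma (1 - α)) * (1 + α * T ^ β / (β - α)) *
          ((1 / Real.Gamma α) * (1 + (1 - α) / (β' + α - 1))) / (1 - α) *
        (MZ + KZ) * Kω * (T₂ - T₁) ^ β' := by
    rw [← hpow, hD, show (-α + 1 : ℝ) = 1 - α by ring]
    ring
  rw [hIoo]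
  refine hmono.trans (le_of_eq ?_)
  rw [hval, hfinal]
end

section
/- Let V and W be Banach spaces, t > 0, 0 < α < β < 1, and let G : V → W satisfy ‖G(v)‖ ≤ c_G + c_{DG}|v| and ‖G(v) − G(w)‖ ≤ c_{DG}|v − w| for all v, w ∈ V. Then there exists a constant c > 0, depending only on α, β, t, c_G and c_{DG} (in particular independent of λ and u), such that for every λ ≥ 0, every u ∈ C^{β,∼}([0,t];V) and every r ∈ (0,t): ‖D^α_{0+} ( e^{−λ(t−·)} G(u(·)) ) [r]‖ ≤ c (1 + ‖u‖_{β,∼,0,t}) r^{−α} ( 1 + r^β (t−r)^{−β} ). -/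
open Set MeasureTheory

section Aux
open intervalIntegral

lemma aux_one_sub_exp_le {x b : ℝ} (hx : 0 ≤ x) (hb0 : 0 ≤ b) (hb1 : b ≤ 1) :
    1 - Real.exp (-x) ≤ x ^ b := by
  rcases le_total x 1 with h | h
  · calc 1 - Real.exp (-x) ≤ x := by nlinarith [Real.add_one_le_exp (-x)]
      _ = x ^ (1:ℝ) := (Real.rpow_one x).symm
      _ ≤ x ^ b := Real.rpow_le_rpow_of_exponent_ge' hx h hb0 hb1
  · have h1 : 1 - Real.exp (-x) ≤ 1 := by
      have := Real.exp_nonneg (-x); linarith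
    exact h1.trans (Real.one_le_rpow h hb0)

lemma aux_rpow_mul_exp_le {x b : ℝ} (hx : 0 ≤ x) (hb0 : 0 ≤ b) (hb1 : b ≤ 1) :
    x ^ b * Real.exp (-x) ≤ 1 := by
  rcases le_total x 1 with h | h
  · have h1 : x ^ b ≤ 1 := Real.rpow_le_one hx h hb0
    have h2 : Real.exp (-x) ≤ 1 := Real.exp_le_one_iff.mpr (by linarith)
    nlinarith [Real.exp_nonneg (-x), Real.rpow_nonneg hx b]
  · have h1 : x ^ b ≤ x := by
      calc x ^ b ≤ x ^ (1:ℝ) := Real.rpow_le_rpow_of_exponent_le h hb1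
        _ = x := Real.rpow_one x
    have h2 : x * Real.exp (-x) ≤ 1 := by
      have h3 : x ≤ Real.exp x := by nlinarith [Real.add_one_le_exp x]
      have h4 := Real.exp_pos x
      have : Real.exp (-x) = (Real.exp x)⁻¹ := by rw [Real.exp_neg]
      rw [this]
      rw [mul_inv_le_iff₀ h4, one_mul]; exact h3
    nlinarith [Real.exp_nonneg (-x)]

lemma aux_exp_diff {lam t q r b : ℝ} (hlam : 0 ≤ lam) (hb0 : 0 ≤ b) (hb1 : b ≤ 1)
    (hq : q ≤ r) (hr : r < t) :
    Real.exp (-lam * (t - r)) - Real.exp (-lam * (t - q)) ≤ (r - q) ^ b * (t - r) ^ (-b) := by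
  have htr : 0 < t - r := by linarith
  have hrq : 0 ≤ r - q := by linarith
  have he : Real.exp (-lam * (t - q)) = Real.exp (-lam * (t - r)) * Real.exp (-(lam * (r - q))) := by
    rw [← Real.exp_add]; ring_nf
  have h1 : Real.exp (-lam * (t - r)) - Real.exp (-lam * (t - q))
      = Real.exp (-lam * (t - r)) * (1 - Real.exp (-(lam * (r - q)))) := by
    rw [he]; ring
  rw [h1]
  have h2 : 1 - Real.exp (-(lam * (r - q))) ≤ (lam * (r - q)) ^ b :=
    aux_one_sub_exp_le (by positivity) hb0 hb1
  have h3 : (lam * (r - q)) ^ b = lam ^ b * (r - q) ^ b := Real.mul_rpow hlam hrq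
  have h4 : lam ^ b = (lam * (t - r)) ^ b * (t - r) ^ (-b) := by
    rw [Real.mul_rpow hlam htr.le, Real.rpow_neg htr.le, mul_assoc,
      mul_inv_cancel₀ (ne_of_gt (Real.rpow_pos_of_pos htr b)), mul_one]
  have h5 : (lam * (t - r)) ^ b * Real.exp (-lam * (t - r)) ≤ 1 := by
    have h := aux_rpow_mul_exp_le (x := lam * (t - r)) (by positivity) hb0 hb1
    rw [show -lam * (t - r) = -(lam * (t - r)) by ring]; exact h
  calc Real.exp (-lam * (t - r)) * (1 - Real.exp (-(lam * (r - q))))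
      ≤ Real.exp (-lam * (t - r)) * ((lam * (r - q)) ^ b) := by
        exact mul_le_mul_of_nonneg_left h2 (Real.exp_nonneg _)
    _ = ((lam * (t - r)) ^ b * Real.exp (-lam * (t - r))) * ((r - q) ^ b * (t - r) ^ (-b)) := by
        rw [h3, h4]; ring
    _ ≤ 1 * ((r - q) ^ b * (t - r) ^ (-b)) := by
        apply mul_le_mul_of_nonneg_right h5
        positivity
    _ = (r - q) ^ b * (t - r) ^ (-b) := one_mul _

lemma aux_meas {β c r : ℝ} : Measurable (fun q : ℝ => q ^ (-β) * (r - q) ^ c) := by fun_prop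

lemma aux_intInt1 {α β r : ℝ} (hα0 : 0 < α) (hαβ : α < β) (hβ1 : β < 1) (hr : 0 < r) :
    IntervalIntegrable (fun q => q ^ (-β) * (r - q) ^ (β - 1 - α)) volume 0 (r/2) := by
  have hβ0 : 0 < β := hα0.trans hαβ
  apply IntervalIntegrable.mono_fun'
    (g := fun q => (r/2) ^ (β - 1 - α) * q ^ (-β))
    (((intervalIntegrable_rpow' (by linarith : (-1:ℝ) < -β)).const_mul ((r/2) ^ (β - 1 - α))))
    aux_meas.aestronglyMeasurable
  rw [uIoc_of_le (by linarith : (0:ℝ) ≤ r/2)]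
  filter_upwards [ae_restrict_mem measurableSet_Ioc] with q hq
  have hq0 : 0 < q := hq.1
  have hq2 : q ≤ r/2 := hq.2
  have hrq : 0 < r - q := by linarith
  have h1 : (r - q) ^ (β - 1 - α) ≤ (r/2) ^ (β - 1 - α) :=
    Real.rpow_le_rpow_of_nonpos (by linarith) (by linarith) (by linarith)
  have h2 : (0:ℝ) ≤ q ^ (-β) := Real.rpow_nonneg hq0.le _
  have h3 : (0:ℝ) ≤ (r - q) ^ (β - 1 - α) := Real.rpow_nonneg hrq.le _
  rw [Real.norm_eq_abs, abs_of_nonneg (by positivity)]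
  calc q ^ (-β) * (r - q) ^ (β - 1 - α) ≤ q ^ (-β) * (r/2) ^ (β - 1 - α) :=
        mul_le_mul_of_nonneg_left h1 h2
    _ = (r/2) ^ (β - 1 - α) * q ^ (-β) := mul_comm _ _

lemma aux_intInt2 {α β r : ℝ} (hα0 : 0 < α) (hαβ : α < β) (hβ1 : β < 1) (hr : 0 < r) :
    IntervalIntegrable (fun q => q ^ (-β) * (r - q) ^ (β - 1 - α)) volume (r/2) r := by
  have hβ0 : 0 < β := hα0.trans hαβ
  have hint : IntervalIntegrable (fun q : ℝ => (r - q) ^ (β - 1 - α)) volume (r/2) r := by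
    have h := (intervalIntegrable_rpow' (by linarith : (-1:ℝ) < β - 1 - α)
      (a := 0) (b := r/2)).comp_sub_left r
    rw [sub_zero, show r - r/2 = r/2 by ring] at h
    exact h.symm
  apply IntervalIntegrable.mono_fun'
    (g := fun q => (r/2) ^ (-β) * (r - q) ^ (β - 1 - α))
    (hint.const_mul _) aux_meas.aestronglyMeasurable
  rw [uIoc_of_le (by linarith : r/2 ≤ r)]
  filter_upwards [ae_restrict_mem measurableSet_Ioc] with q hq
  have hq0 : 0 < q := lt_of_le_of_lt (by linarith) hq.1
  have hrq : 0 ≤ r - q := by linarith [hq.2]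
  have h1 : q ^ (-β) ≤ (r/2) ^ (-β) :=
    Real.rpow_le_rpow_of_nonpos (by linarith) hq.1.le (by linarith)
  have h3 : (0:ℝ) ≤ (r - q) ^ (β - 1 - α) := Real.rpow_nonneg hrq _
  rw [Real.norm_eq_abs, abs_of_nonneg (by positivity)]
  exact mul_le_mul_of_nonneg_right h1 h3

lemma aux_intInt {α β r : ℝ} (hα0 : 0 < α) (hαβ : α < β) (hβ1 : β < 1) (hr : 0 < r) :
    IntervalIntegrable (fun q => q ^ (-β) * (r - q) ^ (β - 1 - α)) volume 0 r :=
  (aux_intInt1 hα0 hαβ hβ1 hr).trans (aux_intInt2 hα0 hαβ hβ1 hr)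

lemma aux_integral_bound {α β r : ℝ} (hα0 : 0 < α) (hαβ : α < β) (hβ1 : β < 1) (hr : 0 < r) :
    ∫ q in (0:ℝ)..r, q ^ (-β) * (r - q) ^ (β - 1 - α)
      ≤ (2 * (1/(1-β) + 1/(β-α))) * r ^ (-α) := by
  have hβ0 : 0 < β := hα0.trans hαβ
  have hr2 : 0 < r/2 := by linarith
  have hβα : 0 < β - α := by linarith
  have h1β : 0 < 1 - β := by linarith
  have hsplit : ∫ q in (0:ℝ)..r, q ^ (-β) * (r - q) ^ (β - 1 - α)
      = (∫ q in (0:ℝ)..(r/2), q ^ (-β) * (r - q) ^ (β - 1 - α))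
        + ∫ q in (r/2)..r, q ^ (-β) * (r - q) ^ (β - 1 - α) :=
    (integral_add_adjacent_intervals (aux_intInt1 hα0 hαβ hβ1 hr)
      (aux_intInt2 hα0 hαβ hβ1 hr)).symm
  have hmono1 : (∫ q in (0:ℝ)..(r/2), q ^ (-β) * (r - q) ^ (β - 1 - α))
      ≤ ∫ q in (0:ℝ)..(r/2), (r/2) ^ (β - 1 - α) * q ^ (-β) := by
    apply integral_mono_on (by linarith) (aux_intInt1 hα0 hαβ hβ1 hr)
      ((intervalIntegrable_rpow' (by linarith : (-1:ℝ) < -β)).const_mul _)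
    intro q hq
    rcases eq_or_lt_of_le hq.1 with h0 | h0
    · rw [← h0]
      simp [Real.zero_rpow (by linarith : -β ≠ 0)]
    · have hq2 : q ≤ r/2 := hq.2
      rw [mul_comm ((r/2) ^ (β - 1 - α)) _]
      exact mul_le_mul_of_nonneg_left
        (Real.rpow_le_rpow_of_nonpos (by linarith) (by linarith) (by linarith))
        (Real.rpow_nonneg h0.le _)
  have hval1 : (∫ q in (0:ℝ)..(r/2), (r/2) ^ (β - 1 - α) * q ^ (-β))
      = (r/2) ^ (-α) * (1/(1-β)) := by
    rw [intervalIntegral.integral_const_mul,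
      integral_rpow (Or.inl (by linarith : (-1:ℝ) < -β)),
      Real.zero_rpow (by linarith : -β + 1 ≠ 0)]
    rw [show (-β + 1 : ℝ) = 1 - β by ring, sub_zero]
    have key : (r/2) ^ (β - 1 - α) * (r/2) ^ (1 - β) = (r/2) ^ (-α) := by
      rw [← Real.rpow_add hr2, show β - 1 - α + (1 - β) = -α by ring]
    calc (r/2) ^ (β - 1 - α) * ((r/2) ^ (1 - β) / (1 - β))
        = ((r/2) ^ (β - 1 - α) * (r/2) ^ (1 - β)) * (1/(1-β)) := by ring
      _ = (r/2) ^ (-α) * (1/(1-β)) := by rw [key]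
  have hmono2 : (∫ q in (r/2)..r, q ^ (-β) * (r - q) ^ (β - 1 - α))
      ≤ ∫ q in (r/2)..r, (r/2) ^ (-β) * (r - q) ^ (β - 1 - α) := by
    have hint : IntervalIntegrable (fun q : ℝ => (r - q) ^ (β - 1 - α)) volume (r/2) r := by
      have h := (intervalIntegrable_rpow' (by linarith : (-1:ℝ) < β - 1 - α)
        (a := 0) (b := r/2)).comp_sub_left r
      rw [sub_zero, show r - r/2 = r/2 by ring] at h
      exact h.symm
    apply integral_mono_on (by linarith) (aux_intInt2 hα0 hαβ hβ1 hr) (hint.const_mul _)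
    intro q hq
    exact mul_le_mul_of_nonneg_right
      (Real.rpow_le_rpow_of_nonpos hr2 hq.1 (by linarith))
      (Real.rpow_nonneg (by linarith [hq.2] : (0:ℝ) ≤ r - q) _)
  have hval2 : (∫ q in (r/2)..r, (r/2) ^ (-β) * (r - q) ^ (β - 1 - α))
      = (r/2) ^ (-α) * (1/(β-α)) := by
    rw [intervalIntegral.integral_const_mul]
    have hcomp : (∫ q in (r/2)..r, (r - q) ^ (β - 1 - α))
        = ∫ x in (r - r)..(r - r/2), x ^ (β - 1 - α) :=
      intervalIntegral.integral_comp_sub_left (fun x => x ^ (β - 1 - α)) r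
    rw [hcomp, sub_self, show r - r/2 = r/2 by ring,
      integral_rpow (Or.inl (by linarith : (-1:ℝ) < β - 1 - α)),
      Real.zero_rpow (by linarith : β - 1 - α + 1 ≠ 0)]
    rw [show (β - 1 - α + 1 : ℝ) = β - α by ring, sub_zero]
    have key : (r/2) ^ (-β) * (r/2) ^ (β - α) = (r/2) ^ (-α) := by
      rw [← Real.rpow_add hr2, show -β + (β - α) = -α by ring]
    calc (r/2) ^ (-β) * ((r/2) ^ (β - α) / (β - α))
        = ((r/2) ^ (-β) * (r/2) ^ (β - α)) * (1/(β-α)) := by ring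
      _ = (r/2) ^ (-α) * (1/(β-α)) := by rw [key]
  have h2a : (r/2) ^ (-α) ≤ 2 * r ^ (-α) := by
    have e1 : (r/2 : ℝ) = r * 2⁻¹ := by ring
    have e2 : ((2:ℝ)⁻¹) ^ (-α) = 2 ^ α := by
      rw [Real.inv_rpow (by norm_num), ← Real.rpow_neg (by norm_num), neg_neg]
    have e3 : (r/2) ^ (-α) = r ^ (-α) * 2 ^ α := by
      rw [e1, Real.mul_rpow hr.le (by norm_num), e2]
    have e4 : (2:ℝ) ^ α ≤ 2 := by
      calc (2:ℝ) ^ α ≤ 2 ^ (1:ℝ) :=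
            Real.rpow_le_rpow_of_exponent_le (by norm_num) (by linarith)
        _ = 2 := Real.rpow_one 2
    rw [e3]
    have := Real.rpow_nonneg hr.le (-α)
    nlinarith
  have hpos : (0:ℝ) ≤ 1/(1-β) + 1/(β-α) := by positivity
  calc ∫ q in (0:ℝ)..r, q ^ (-β) * (r - q) ^ (β - 1 - α)
      ≤ (r/2) ^ (-α) * (1/(1-β)) + (r/2) ^ (-α) * (1/(β-α)) := by
        rw [hsplit]
        exact add_le_add (hmono1.trans hval1.le) (hmono2.trans hval2.le)
    _ = (r/2) ^ (-α) * (1/(1-β) + 1/(β-α)) := by ring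
    _ ≤ (2 * r ^ (-α)) * (1/(1-β) + 1/(β-α)) := mul_le_mul_of_nonneg_right h2a hpos
    _ = (2 * (1/(1-β) + 1/(β-α))) * r ^ (-α) := by ring

end Aux

set_option maxHeartbeats 1000000 in
/-- A priori estimate for the fractional derivative of `r ↦ e^{−λ(t−r)}G(u(r))`, where
`G` has linear growth (constants `c_G`, `c_{DG}`) and is `c_{DG}`-Lipschitz, and
`u ∈ C^{β,∼}([0,t];V)` (sup bound `Mu`, weighted Hölder constant `Ku`): there is a
constant `c = c(α,β,t,c_G,c_{DG}) > 0`, independent of `λ ≥ 0` and of `u`, with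
`‖D^α_{0+}(e^{−λ(t−·)}G(u(·)))[r]‖ ≤ c(1 + ‖u‖_{β,∼,0,t}) r^{−α}(1 + r^β (t−r)^{−β})`
for all `r ∈ (0,t)`. -/
theorem fracDerivLeft_semigroup_bound {V W : Type*}
    [NormedAddCommGroup V] [NormedSpace ℝ V] [CompleteSpace V]
    [NormedAddCommGroup W] [NormedSpace ℝ W] [CompleteSpace W]
    {α β t cG cDG : ℝ} (ht : 0 < t) (hα0 : 0 < α) (hαβ : α < β) (hβ1 : β < 1)
    (hcG : 0 ≤ cG) (hcDG : 0 ≤ cDG) :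
    ∃ c > 0, ∀ G : V → W,
      (∀ v : V, ‖G v‖ ≤ cG + cDG * ‖v‖) →
      (∀ v w : V, ‖G v - G w‖ ≤ cDG * ‖v - w‖) →
      ∀ lam : ℝ, 0 ≤ lam →
      ∀ (u : ℝ → V) (Mu Ku : ℝ),
        ContinuousOn u (Icc 0 t) →
        (∀ s ∈ Icc (0:ℝ) t, ‖u s‖ ≤ Mu) →
        (∀ q r : ℝ, 0 < q → q ≤ r → r ≤ t →
          ‖u r - u q‖ ≤ Ku * q ^ (-β) * (r - q) ^ β) →
        ∀ r ∈ Ioo (0:ℝ) t,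
          ‖fracDerivLeft α 0 (fun s => Real.exp (-lam * (t - s)) • G (u s)) r‖ ≤
            c * (1 + Mu + Ku) * r ^ (-α) * (1 + r ^ β * (t - r) ^ (-β)) := by
  have hβ0 : 0 < β := hα0.trans hαβ
  have hΓ : 0 < Real.Gamma (1 - α) := Real.Gamma_pos_of_pos (by linarith)
  set Cb : ℝ := 2 * (1/(1-β) + 1/(β-α)) with hCb
  have hCb0 : 0 < Cb := by
    rw [hCb]
    have h1 : (0:ℝ) < 1 - β := by linarith
    have h2 : (0:ℝ) < β - α := by linarith
    positivity
  refine ⟨(1 / Real.Gamma (1-α)) * (1 + cG + cDG) * (1 + α * Cb), by positivity, ?_⟩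
  intro G hG hGL lam hlam u Mu Ku hu hMu hKu r hr
  obtain ⟨hr0, hrt⟩ := hr
  have htr : 0 < t - r := by linarith
  have hMu0 : 0 ≤ Mu := (norm_nonneg _).trans (hMu 0 ⟨le_refl 0, ht.le⟩)
  have hKu0 : 0 ≤ Ku := by
    have h := hKu (t/2) t (by linarith) (by linarith) le_rfl
    rw [show t - t/2 = t/2 by ring] at h
    have h3 : (0:ℝ) < (t/2) ^ (-β) := Real.rpow_pos_of_pos (by linarith) _
    have h4 : (0:ℝ) < (t/2) ^ β := Real.rpow_pos_of_pos (by linarith) _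
    nlinarith [norm_nonneg (u t - u (t/2)), mul_pos h3 h4]
  set Z : ℝ → W := fun s => Real.exp (-lam * (t - s)) • G (u s) with hZ
  set D : ℝ := cG + cDG * Mu with hD
  have hD0 : 0 ≤ D := add_nonneg hcG (mul_nonneg hcDG hMu0)
  set P : ℝ := r ^ β * (t - r) ^ (-β) with hP
  have hP0 : 0 ≤ P := mul_nonneg (Real.rpow_nonneg hr0.le _) (Real.rpow_nonneg htr.le _)
  set K1 : ℝ := cDG * Ku + D * P with hK1
  have hK10 : 0 ≤ K1 := add_nonneg (mul_nonneg hcDG hKu0) (mul_nonneg hD0 hP0)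
  have hZr : ‖Z r‖ ≤ D := by
    rw [hZ]
    simp only
    rw [norm_smul, Real.norm_eq_abs, abs_of_nonneg (Real.exp_nonneg _)]
    have h1 : Real.exp (-lam * (t - r)) ≤ 1 := Real.exp_le_one_iff.mpr (by nlinarith)
    have h2 : ‖G (u r)‖ ≤ cG + cDG * Mu := by
      have h3 := hG (u r)
      have h4 := hMu r ⟨hr0.le, hrt.le⟩
      nlinarith [norm_nonneg (u r)]
    calc Real.exp (-lam * (t - r)) * ‖G (u r)‖ ≤ 1 * (cG + cDG * Mu) :=
          mul_le_mul h1 h2 (norm_nonneg _) one_pos.le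
      _ = D := by rw [hD]; ring
  have hptwise : ∀ q ∈ Ioc (0:ℝ) r,
      ‖((r - q) ^ (-(1+α))) • (Z r - Z q)‖ ≤ K1 * (q ^ (-β) * (r - q) ^ (β - 1 - α)) := by
    intro q hq
    rcases eq_or_lt_of_le hq.2 with hqr | hqr
    · rw [hqr]
      simp [Real.zero_rpow (show β - 1 - α ≠ 0 by intro h; nlinarith)]
    · have hq0 : 0 < q := hq.1
      have hrq : 0 < r - q := by linarith
      have hdec : Z r - Z q = Real.exp (-lam * (t - r)) • (G (u r) - G (u q))
          + (Real.exp (-lam * (t - r)) - Real.exp (-lam * (t - q))) • G (u q) := by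
        rw [hZ]
        simp only [smul_sub, sub_smul]
        abel
      have he1 : Real.exp (-lam * (t - r)) ≤ 1 := Real.exp_le_one_iff.mpr (by nlinarith)
      have hGuq : ‖G (u q)‖ ≤ D := by
        have h3 := hG (u q)
        have h4 := hMu q ⟨hq0.le, by linarith⟩
        rw [hD]
        nlinarith [norm_nonneg (u q)]
      have hHol : ‖u r - u q‖ ≤ Ku * q ^ (-β) * (r - q) ^ β := hKu q r hq0 hq.2 hrt.le
      have hediff : Real.exp (-lam*(t-r)) - Real.exp (-lam*(t-q)) ≤ (r-q)^β * (t-r)^(-β) :=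
        aux_exp_diff hlam hβ0.le hβ1.le hq.2 hrt
      have hediff0 : 0 ≤ Real.exp (-lam*(t-r)) - Real.exp (-lam*(t-q)) := by
        have h5 : Real.exp (-lam*(t-q)) ≤ Real.exp (-lam*(t-r)) :=
          Real.exp_le_exp.mpr (by nlinarith)
        linarith
      have hnorm : ‖Z r - Z q‖ ≤ cDG * (Ku * q^(-β) * (r-q)^β) + D * ((r-q)^β * (t-r)^(-β)) := by
        rw [hdec]
        have ha : ‖Real.exp (-lam * (t - r)) • (G (u r) - G (u q))‖
            ≤ cDG * (Ku * q^(-β) * (r-q)^β) := by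
          rw [norm_smul, Real.norm_eq_abs, abs_of_nonneg (Real.exp_nonneg _)]
          have h6 : ‖G (u r) - G (u q)‖ ≤ cDG * ‖u r - u q‖ := hGL _ _
          have h7 : cDG * ‖u r - u q‖ ≤ cDG * (Ku * q^(-β) * (r-q)^β) :=
            mul_le_mul_of_nonneg_left hHol hcDG
          calc Real.exp (-lam * (t - r)) * ‖G (u r) - G (u q)‖
              ≤ 1 * ‖G (u r) - G (u q)‖ :=
                mul_le_mul_of_nonneg_right he1 (norm_nonneg _)
            _ = ‖G (u r) - G (u q)‖ := one_mul _
            _ ≤ cDG * (Ku * q^(-β) * (r-q)^β) := h6.trans h7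
        have hb : ‖(Real.exp (-lam * (t - r)) - Real.exp (-lam * (t - q))) • G (u q)‖
            ≤ D * ((r-q)^β * (t-r)^(-β)) := by
          rw [norm_smul, Real.norm_eq_abs, abs_of_nonneg hediff0]
          calc (Real.exp (-lam*(t-r)) - Real.exp (-lam*(t-q))) * ‖G (u q)‖
              ≤ ((r-q)^β * (t-r)^(-β)) * D :=
                mul_le_mul hediff hGuq (norm_nonneg _) (by positivity)
            _ = D * ((r-q)^β * (t-r)^(-β)) := mul_comm _ _
        calc ‖Real.exp (-lam * (t - r)) • (G (u r) - G (u q))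
              + (Real.exp (-lam * (t - r)) - Real.exp (-lam * (t - q))) • G (u q)‖
            ≤ ‖Real.exp (-lam * (t - r)) • (G (u r) - G (u q))‖
              + ‖(Real.exp (-lam * (t - r)) - Real.exp (-lam * (t - q))) • G (u q)‖ :=
              norm_add_le _ _
          _ ≤ cDG * (Ku * q^(-β) * (r-q)^β) + D * ((r-q)^β * (t-r)^(-β)) := add_le_add ha hb
      rw [norm_smul, Real.norm_eq_abs, abs_of_nonneg (Real.rpow_nonneg hrq.le _)]
      have hpow : (r-q)^(-(1+α)) * (r-q)^β = (r-q)^(β-1-α) := by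
        rw [← Real.rpow_add hrq, show -(1+α)+β = β-1-α by ring]
      have hge1 : 1 ≤ r^β * q^(-β) := by
        have h8 : q^β ≤ r^β := Real.rpow_le_rpow hq0.le hq.2 hβ0.le
        have hqβ : 0 < q^β := Real.rpow_pos_of_pos hq0 β
        rw [Real.rpow_neg hq0.le, ← div_eq_mul_inv]
        exact (one_le_div hqβ).mpr h8
      have hX0 : (0:ℝ) ≤ (r-q)^(β-1-α) := Real.rpow_nonneg hrq.le _
      have hrpown : (0:ℝ) ≤ (r-q)^(-(1+α)) := Real.rpow_nonneg hrq.le _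
      calc (r-q)^(-(1+α)) * ‖Z r - Z q‖
          ≤ (r-q)^(-(1+α)) * (cDG * (Ku * q^(-β) * (r-q)^β) + D * ((r-q)^β * (t-r)^(-β))) :=
            mul_le_mul_of_nonneg_left hnorm hrpown
        _ = cDG*Ku*q^(-β)*((r-q)^(-(1+α))*(r-q)^β)
            + D*(t-r)^(-β)*((r-q)^(-(1+α))*(r-q)^β) := by ring
        _ = cDG*Ku*(q^(-β)*(r-q)^(β-1-α)) + D*(t-r)^(-β)*(r-q)^(β-1-α) := by
            rw [hpow]; ring
        _ ≤ cDG*Ku*(q^(-β)*(r-q)^(β-1-α))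
            + D*(t-r)^(-β)*(r^β*q^(-β))*(r-q)^(β-1-α) := by
            have h9 : 0 ≤ D*(t-r)^(-β)*(r-q)^(β-1-α) :=
              mul_nonneg (mul_nonneg hD0 (Real.rpow_nonneg htr.le _)) hX0
            nlinarith [mul_le_mul_of_nonneg_left hge1 h9]
        _ = K1 * (q^(-β)*(r-q)^(β-1-α)) := by rw [hK1, hP, hD]; ring
  have hI : ‖∫ q in (0:ℝ)..r, ((r - q) ^ (-(1+α))) • (Z r - Z q)‖ ≤ K1 * (Cb * r^(-α)) := by
    have hInt : IntegrableOn (fun q => K1 * (q^(-β)*(r-q)^(β-1-α))) (Ioc (0:ℝ) r) volume := by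
      have h := (aux_intInt hα0 hαβ hβ1 hr0).const_mul K1
      exact (intervalIntegrable_iff_integrableOn_Ioc_of_le hr0.le).mp h
    calc ‖∫ q in (0:ℝ)..r, ((r - q) ^ (-(1+α))) • (Z r - Z q)‖
        ≤ ∫ q in (0:ℝ)..r, ‖((r - q) ^ (-(1+α))) • (Z r - Z q)‖ :=
          intervalIntegral.norm_integral_le_integral_norm hr0.le
      _ = ∫ q in Ioc (0:ℝ) r, ‖((r - q) ^ (-(1+α))) • (Z r - Z q)‖ :=
          intervalIntegral.integral_of_le hr0.le
      _ ≤ ∫ q in Ioc (0:ℝ) r, K1 * (q^(-β)*(r-q)^(β-1-α)) := by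
          apply integral_mono_of_nonneg
          · exact Filter.Eventually.of_forall fun q => norm_nonneg _
          · exact hInt
          · filter_upwards [ae_restrict_mem measurableSet_Ioc] with q hq using hptwise q hq
      _ = K1 * ∫ q in Ioc (0:ℝ) r, q^(-β)*(r-q)^(β-1-α) := integral_const_mul K1 _
      _ = K1 * ∫ q in (0:ℝ)..r, q^(-β)*(r-q)^(β-1-α) := by
          rw [intervalIntegral.integral_of_le hr0.le]
      _ ≤ K1 * (Cb * r^(-α)) :=
          mul_le_mul_of_nonneg_left (aux_integral_bound hα0 hαβ hβ1 hr0) hK10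
  have hkey : D + α*Cb*K1 ≤ (1+cG+cDG)*(1+α*Cb)*((1+Mu+Ku)*(1+P)) := by
    have hE0 : (0:ℝ) ≤ (1+cG+cDG)*(1+Mu+Ku) := by positivity
    have hDE : D ≤ (1+cG+cDG)*(1+Mu+Ku) := by rw [hD]; nlinarith
    have hKE : cDG*Ku ≤ (1+cG+cDG)*(1+Mu+Ku) := by nlinarith
    have h1 : α*Cb*(cDG*Ku) ≤ α*Cb*((1+cG+cDG)*(1+Mu+Ku)) :=
      mul_le_mul_of_nonneg_left hKE (by positivity)
    have h2 : (α*Cb*P)*D ≤ (α*Cb*P)*((1+cG+cDG)*(1+Mu+Ku)) :=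
      mul_le_mul_of_nonneg_left hDE (by positivity)
    have h3 : 0 ≤ ((1+cG+cDG)*(1+Mu+Ku))*P := mul_nonneg hE0 hP0
    rw [hK1]
    nlinarith [h1, h2, h3, hDE]
  rw [fracDerivLeft, sub_zero]
  have hgR : (0:ℝ) ≤ (1 / Real.Gamma (1-α)) * r^(-α) :=
    mul_nonneg (by positivity) (Real.rpow_nonneg hr0.le _)
  calc ‖(1 / Real.Gamma (1 - α)) •
        ((r ^ (-α)) • Z r + α • ∫ q in (0:ℝ)..r, ((r - q) ^ (-(1 + α))) • (Z r - Z q))‖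
      = (1 / Real.Gamma (1-α)) *
          ‖(r ^ (-α)) • Z r + α • ∫ q in (0:ℝ)..r, ((r - q) ^ (-(1 + α))) • (Z r - Z q)‖ := by
        rw [norm_smul, Real.norm_eq_abs, abs_of_nonneg (by positivity)]
    _ ≤ (1 / Real.Gamma (1-α)) * (r^(-α) * ‖Z r‖
          + α * ‖∫ q in (0:ℝ)..r, ((r - q) ^ (-(1 + α))) • (Z r - Z q)‖) := by
        apply mul_le_mul_of_nonneg_left _ (by positivity)
        calc ‖(r ^ (-α)) • Z r + α • ∫ q in (0:ℝ)..r, ((r - q) ^ (-(1 + α))) • (Z r - Z q)‖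
            ≤ ‖(r ^ (-α)) • Z r‖
              + ‖α • ∫ q in (0:ℝ)..r, ((r - q) ^ (-(1 + α))) • (Z r - Z q)‖ := norm_add_le _ _
          _ = r^(-α) * ‖Z r‖
              + α * ‖∫ q in (0:ℝ)..r, ((r - q) ^ (-(1 + α))) • (Z r - Z q)‖ := by
              rw [norm_smul_of_nonneg (Real.rpow_nonneg hr0.le _),
                norm_smul_of_nonneg hα0.le]
    _ ≤ (1 / Real.Gamma (1-α)) * (r^(-α) * D + α * (K1 * (Cb * r^(-α)))) := by
        apply mul_le_mul_of_nonneg_left _ (by positivity)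
        exact add_le_add (mul_le_mul_of_nonneg_left hZr (Real.rpow_nonneg hr0.le _))
          (mul_le_mul_of_nonneg_left hI hα0.le)
    _ = ((1 / Real.Gamma (1-α)) * r^(-α)) * (D + α*Cb*K1) := by ring
    _ ≤ ((1 / Real.Gamma (1-α)) * r^(-α)) * ((1+cG+cDG)*(1+α*Cb)*((1+Mu+Ku)*(1+P))) :=
        mul_le_mul_of_nonneg_left hkey hgR
    _ = (1 / Real.Gamma (1-α)) * (1 + cG + cDG) * (1 + α * Cb) * (1 + Mu + Ku) * r ^ (-α)
          * (1 + P) := by ring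
end

section
/- Let V be a Banach space, t > 0, 0 < α < β < 1, and let p > 1 satisfy pβ < 1, p(1+α−β) < 1 and p(1+α) < 2. Let u : [0,t] → V be continuous with |u(r) − u(q)| ≤ M q^{−β}(r−q)^β for all 0 < q ≤ r ≤ t and some M ≥ 0, and let g : V → ℝ be Lipschitz continuous. For ε > 0 define ψ_ε(r) = ∫_0^{r−ε} (g(u(r)) − g(u(q)))/(r−q)^{1+α} dq if r > ε, and ψ_ε(r) = (g(u(r))/α)(ε^{−α} − r^{−α}) if 0 ≤ r ≤ ε; and define ψ₀(r) = ∫_0^r (g(u(r)) − g(u(q)))/(r−q)^{1+α} dq for r ∈ (0,t]. Then ψ_ε converges to ψ₀ in L_p((0,t);ℝ) as ε → 0⁺, i.e. lim_{ε→0⁺} ∫_0^t |ψ_ε(r) − ψ₀(r)|^p dr = 0. -/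
open Set MeasureTheory intervalIntegral

private lemma aux_phi_ii {β c r : ℝ} (hβ : β < 1) (hc : -1 < c) (hr : 0 < r) :
    IntervalIntegrable (fun q => q ^ (-β) * (r - q) ^ c) volume 0 r := by
  have h2 : (0:ℝ) < r / 2 := by linarith
  have p1 : IntervalIntegrable (fun q => q ^ (-β) * (r - q) ^ c) volume 0 (r / 2) := by
    apply IntervalIntegrable.mul_continuousOn
    · exact intervalIntegrable_rpow' (by linarith)
    · apply ContinuousOn.rpow_const (continuous_const.sub continuous_id).continuousOn
      intro x hx
      rw [uIcc_of_le (by linarith)] at hx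
      exact Or.inl (by show r - x ≠ 0; nlinarith [hx.2])
  have p2 : IntervalIntegrable (fun q => q ^ (-β) * (r - q) ^ c) volume (r / 2) r := by
    have base : IntervalIntegrable (fun x : ℝ => x ^ c) volume (r - r / 2) (r - r) :=
      intervalIntegrable_rpow' hc
    have b2 := base.comp_sub_left r
    simp only [sub_sub_cancel, sub_self, sub_zero] at b2
    have b3 : IntervalIntegrable (fun x : ℝ => (r - x) ^ c) volume (r / 2) r := by
      simpa using b2
    apply b3.continuousOn_mul
    apply ContinuousOn.rpow_const continuousOn_id
    intro x hx
    rw [uIcc_of_le (by linarith)] at hx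
    exact Or.inl (by intro h; simp only [id_eq] at h; rw [h] at hx; linarith [hx.1])
  exact p1.trans p2

private lemma aux_int_rpow_sub {c : ℝ} (hc : -1 < c) (r a b : ℝ) :
    ∫ q in a..b, (r - q) ^ c = ((r - a) ^ (c + 1) - (r - b) ^ (c + 1)) / (c + 1) := by
  rw [intervalIntegral.integral_comp_sub_left (fun x : ℝ => x ^ c) r,
    integral_rpow (Or.inl hc)]

private lemma aux_phi_bound {α β r : ℝ} (hα0 : 0 < α) (hαβ : α < β) (hβ1 : β < 1)
    (hr : 0 < r) :
    ∫ q in (0:ℝ)..r, q ^ (-β) * (r - q) ^ (β - 1 - α)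
      ≤ (2:ℝ) ^ α * (1 / (1 - β) + 1 / (β - α)) * r ^ (-α) := by
  set c := β - 1 - α with hc
  have hc1 : -1 < c := by rw [hc]; linarith
  have h2 : (0:ℝ) < r / 2 := by linarith
  have hii := aux_phi_ii hβ1 hc1 hr
  have hii1 : IntervalIntegrable (fun q => q ^ (-β) * (r - q) ^ c) volume 0 (r / 2) :=
    hii.mono_set (by rw [uIcc_of_le (by linarith), uIcc_of_le hr.le]; exact Icc_subset_Icc le_rfl (by linarith))
  have hii2 : IntervalIntegrable (fun q => q ^ (-β) * (r - q) ^ c) volume (r / 2) r :=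
    hii.mono_set (by rw [uIcc_of_le (by linarith), uIcc_of_le hr.le]; exact Icc_subset_Icc h2.le le_rfl)
  have hsplit : (∫ q in (0:ℝ)..(r/2), q ^ (-β) * (r - q) ^ c)
      + (∫ q in (r/2:ℝ)..r, q ^ (-β) * (r - q) ^ c)
      = ∫ q in (0:ℝ)..r, q ^ (-β) * (r - q) ^ c :=
    integral_add_adjacent_intervals hii1 hii2
  have hmaj1 : IntervalIntegrable (fun q : ℝ => q ^ (-β) * (r/2) ^ c) volume 0 (r/2) :=
    (intervalIntegrable_rpow' (by linarith)).mul_const _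
  have hb1 : (∫ q in (0:ℝ)..(r/2), q ^ (-β) * (r - q) ^ c)
      ≤ ∫ q in (0:ℝ)..(r/2), q ^ (-β) * (r/2) ^ c := by
    apply integral_mono_on h2.le hii1 hmaj1
    intro x hx
    rcases eq_or_lt_of_le hx.1 with h0 | h0
    · rw [← h0, Real.zero_rpow (by linarith : -β ≠ 0), zero_mul, zero_mul]
    · apply mul_le_mul_of_nonneg_left _ (Real.rpow_nonneg (by linarith [hx.1]) _)
      apply Real.rpow_le_rpow_of_nonpos h2 (by linarith [hx.2]) (by linarith)
  have he1 : (∫ q in (0:ℝ)..(r/2), q ^ (-β) * (r/2) ^ c) = (r/2) ^ (-α) / (1 - β) := by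
    rw [intervalIntegral.integral_mul_const, integral_rpow (Or.inl (by linarith)),
      Real.zero_rpow (by linarith : -β + 1 ≠ 0)]
    rw [sub_zero, div_mul_eq_mul_div, ← Real.rpow_add h2,
      show -β + 1 + c = -α by rw [hc]; ring, show -β + 1 = 1 - β by ring]
  have hmaj2 : IntervalIntegrable (fun q : ℝ => (r/2) ^ (-β) * (r - q) ^ c) volume (r/2) r := by
    have base : IntervalIntegrable (fun x : ℝ => x ^ c) volume (r - r / 2) (r - r) :=
      intervalIntegrable_rpow' hc1
    have b2 := base.comp_sub_left r
    simp only [sub_sub_cancel, sub_self, sub_zero] at b2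
    exact (by simpa using b2 : IntervalIntegrable (fun x : ℝ => (r - x) ^ c) volume (r / 2) r).const_mul _
  have hb2 : (∫ q in (r/2:ℝ)..r, q ^ (-β) * (r - q) ^ c)
      ≤ ∫ q in (r/2:ℝ)..r, (r/2) ^ (-β) * (r - q) ^ c := by
    apply integral_mono_on (by linarith) hii2 hmaj2
    intro x hx
    apply mul_le_mul_of_nonneg_right _ (Real.rpow_nonneg (by linarith [hx.2]) _)
    exact Real.rpow_le_rpow_of_nonpos h2 hx.1 (by linarith)
  have he2 : (∫ q in (r/2:ℝ)..r, (r/2) ^ (-β) * (r - q) ^ c) = (r/2) ^ (-α) / (β - α) := by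
    have hca : c + 1 = β - α := by rw [hc]; ring
    rw [intervalIntegral.integral_const_mul, aux_int_rpow_sub hc1 r _ _, sub_self,
      Real.zero_rpow (by rw [hca]; exact ne_of_gt (by linarith))]
    have hrr : r - r / 2 = r / 2 := by ring
    rw [hrr, sub_zero, mul_div_assoc', ← Real.rpow_add h2,
      show -β + (c + 1) = -α by rw [hc]; ring, hca]
  have hhalf : (r/2) ^ (-α) = (2:ℝ) ^ α * r ^ (-α) := by
    rw [div_eq_mul_inv, Real.mul_rpow hr.le (by norm_num),
      Real.inv_rpow (by norm_num), ← Real.rpow_neg (by norm_num), neg_neg, mul_comm]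
  calc (∫ q in (0:ℝ)..r, q ^ (-β) * (r - q) ^ c)
      = _ + _ := hsplit.symm
    _ ≤ (r/2) ^ (-α) / (1 - β) + (r/2) ^ (-α) / (β - α) :=
        add_le_add (hb1.trans (le_of_eq he1)) (hb2.trans (le_of_eq he2))
    _ = (2:ℝ) ^ α * (1 / (1 - β) + 1 / (β - α)) * r ^ (-α) := by
        rw [hhalf]; ring

/-- The approximating function `ψ_ε` of Lemma 8:
`ψ_ε(r) = ∫_0^{r−ε} (g(u(r)) − g(u(q)))/(r−q)^{1+α} dq` for `r > ε` and
`ψ_ε(r) = (g(u(r))/α)(ε^{−α} − r^{−α})` for `0 ≤ r ≤ ε`. -/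
noncomputable def psiEps {V : Type*} [NormedAddCommGroup V]
    (α : ℝ) (g : V → ℝ) (u : ℝ → V) (ε r : ℝ) : ℝ :=
  if ε < r then ∫ q in (0:ℝ)..(r - ε), (g (u r) - g (u q)) / (r - q) ^ (1 + α)
  else (g (u r) / α) * (ε ^ (-α) - r ^ (-α))

/-- The limit function `ψ₀(r) = ∫_0^r (g(u(r)) − g(u(q)))/(r−q)^{1+α} dq`. -/
noncomputable def psiZero {V : Type*} [NormedAddCommGroup V]
    (α : ℝ) (g : V → ℝ) (u : ℝ → V) (r : ℝ) : ℝ :=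
  ∫ q in (0:ℝ)..r, (g (u r) - g (u q)) / (r - q) ^ (1 + α)

/-- If `u ∈ C^{β,∼}([0,t];V)` (weighted Hölder constant `M`), `g` is Lipschitz,
`0 < α < β < 1` and `p > 1` satisfies `pβ < 1`, `p(1+α−β) < 1` and `p(1+α) < 2`,
then `ψ_ε → ψ₀` in `L_p((0,t);ℝ)` as `ε → 0⁺`. -/
theorem psiEps_tendsto_Lp {V : Type*} [NormedAddCommGroup V]
    {t α β p : ℝ} (ht : 0 < t) (hα0 : 0 < α) (hαβ : α < β) (hβ1 : β < 1)
    (hp : 1 < p) (hpβ : p * β < 1) (hpαβ : p * (1 + α - β) < 1)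
    (hpα : p * (1 + α) < 2)
    (u : ℝ → V) (M : ℝ) (hM : 0 ≤ M) (hu : ContinuousOn u (Icc 0 t))
    (hhol : ∀ q r : ℝ, 0 < q → q ≤ r → r ≤ t →
      ‖u r - u q‖ ≤ M * q ^ (-β) * (r - q) ^ β)
    (g : V → ℝ) (L : NNReal) (hg : LipschitzWith L g) :
    Filter.Tendsto
      (fun ε : ℝ => ∫ r in (0:ℝ)..t, |psiEps α g u ε r - psiZero α g u r| ^ p)
      (nhdsWithin 0 (Ioi 0)) (nhds 0) := by
  have hp0 : (0:ℝ) < p := lt_trans one_pos hp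
  have hc1 : (-1:ℝ) < β - 1 - α := by linarith
  have hβα : (0:ℝ) < β - α := by linarith
  have h1β : (0:ℝ) < 1 - β := by linarith
  have hpα1 : p * α < 1 := lt_trans (by nlinarith) hpβ
  have h1pα : (0:ℝ) < 1 - p * α := by linarith
  have h1pβ : (0:ℝ) < 1 - p * β := by linarith
  obtain ⟨C0, hC0⟩ := isCompact_Icc.exists_bound_of_continuousOn
    (hg.continuous.comp_continuousOn hu)
  have hC00 : 0 ≤ C0 := le_trans (norm_nonneg _) (hC0 0 (left_mem_Icc.mpr ht.le))
  set K : ℝ := (L : ℝ) * M with hKdef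
  have hK0 : 0 ≤ K := mul_nonneg L.coe_nonneg hM
  set Cφ : ℝ := (2:ℝ) ^ α * (1 / (1 - β) + 1 / (β - α)) with hCφdef
  have hCφ0 : 0 ≤ Cφ := mul_nonneg (Real.rpow_nonneg (by norm_num) _)
    (add_nonneg (le_of_lt (by positivity)) (le_of_lt (by positivity)))
  -- integrability of φ on subintervals
  have hφsub : ∀ r : ℝ, 0 < r → ∀ a b : ℝ, 0 ≤ a → a ≤ b → b ≤ r →
      IntervalIntegrable (fun q => q ^ (-β) * (r - q) ^ (β - 1 - α)) volume a b := by
    intro r hr a b ha hab hb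
    apply (aux_phi_ii hβ1 hc1 hr).mono_set
    rw [uIcc_of_le hr.le, uIcc_of_le hab]
    exact Icc_subset_Icc ha hb
  -- pointwise bound on the integrand
  have hbnd : ∀ r ∈ Ioc (0:ℝ) t, ∀ q ∈ Ioc (0:ℝ) r,
      |(g (u r) - g (u q)) / (r - q) ^ (1 + α)|
        ≤ K * (q ^ (-β) * (r - q) ^ (β - 1 - α)) := by
    rintro r ⟨hr0, hrt⟩ q ⟨hq0, hqr⟩
    rcases eq_or_lt_of_le hqr with heq | hlt
    · rw [heq]
      simp only [sub_self, zero_div, abs_zero,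
        Real.zero_rpow (ne_of_lt (show β - 1 - α < 0 by linarith)), mul_zero, le_refl]
    · have hd : 0 < r - q := by linarith
      have hdp : 0 < (r - q) ^ (1 + α) := Real.rpow_pos_of_pos hd _
      have hnum : |g (u r) - g (u q)| ≤ K * (q ^ (-β) * (r - q) ^ β) := by
        have h1 : dist (g (u r)) (g (u q)) ≤ L * dist (u r) (u q) := hg.dist_le_mul _ _
        rw [Real.dist_eq, dist_eq_norm] at h1
        calc |g (u r) - g (u q)| ≤ L * ‖u r - u q‖ := h1
          _ ≤ (L:ℝ) * (M * q ^ (-β) * (r - q) ^ β) :=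
              mul_le_mul_of_nonneg_left (hhol q r hq0 hqr hrt) L.coe_nonneg
          _ = K * (q ^ (-β) * (r - q) ^ β) := by rw [hKdef]; ring
      rw [abs_div, abs_of_pos hdp, div_le_iff₀ hdp]
      have hsplitpow : (r - q) ^ (β - 1 - α) * (r - q) ^ (1 + α) = (r - q) ^ β := by
        rw [← Real.rpow_add hd, show β - 1 - α + (1 + α) = β by ring]
      calc |g (u r) - g (u q)| ≤ K * (q ^ (-β) * (r - q) ^ β) := hnum
        _ = K * (q ^ (-β) * (r - q) ^ (β - 1 - α)) * (r - q) ^ (1 + α) := by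
            rw [← hsplitpow]; ring
  -- integrability of the integrand
  have hIntH : ∀ r ∈ Ioc (0:ℝ) t, ∀ a b : ℝ, 0 ≤ a → a ≤ b → b ≤ r →
      IntervalIntegrable (fun q => (g (u r) - g (u q)) / (r - q) ^ (1 + α)) volume a b := by
    rintro r ⟨hr0, hrt⟩ a b ha hab hb
    have hfull : IntervalIntegrable
        (fun q => (g (u r) - g (u q)) / (r - q) ^ (1 + α)) volume 0 r := by
      rw [intervalIntegrable_iff_integrableOn_Ioc_of_le hr0.le]
      have hgu : AEMeasurable (fun q => g (u q)) (volume.restrict (Ioc 0 r)) := by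
        apply ContinuousOn.aemeasurable _ measurableSet_Ioc
        exact (hg.continuous.comp_continuousOn hu).mono
          (fun x hx => ⟨hx.1.le, le_trans hx.2 hrt⟩)
      have hden : Measurable fun q : ℝ => (r - q) ^ (1 + α) := by fun_prop
      apply Integrable.mono'
        (g := fun q => K * (q ^ (-β) * (r - q) ^ (β - 1 - α)))
      · exact (intervalIntegrable_iff_integrableOn_Ioc_of_le hr0.le).mp
          ((aux_phi_ii hβ1 hc1 hr0).const_mul K)
      · exact ((aemeasurable_const.sub hgu).div hden.aemeasurable).aestronglyMeasurable
      · rw [ae_restrict_iff' measurableSet_Ioc]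
        exact ae_of_all _ fun q hq => by
          rw [Real.norm_eq_abs]; exact hbnd r ⟨hr0, hrt⟩ q hq
    apply hfull.mono_set
    rw [uIcc_of_le hr0.le, uIcc_of_le hab]
    exact Icc_subset_Icc ha hb
  -- abs of partial integrals
  have hAbs : ∀ r ∈ Ioc (0:ℝ) t, ∀ a b : ℝ, 0 ≤ a → a ≤ b → b ≤ r →
      |∫ q in a..b, (g (u r) - g (u q)) / (r - q) ^ (1 + α)|
        ≤ K * ∫ q in a..b, q ^ (-β) * (r - q) ^ (β - 1 - α) := by
    rintro r hr a b ha hab hb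
    have hφab := hφsub r hr.1 a b ha hab hb
    have hintnn : 0 ≤ ∫ q in a..b, q ^ (-β) * (r - q) ^ (β - 1 - α) :=
      intervalIntegral.integral_nonneg hab fun x hx =>
        mul_nonneg (Real.rpow_nonneg (le_trans ha hx.1) _)
          (Real.rpow_nonneg (by linarith [hx.2, hb] : (0:ℝ) ≤ r - x) _)
    have hb' := intervalIntegral.norm_integral_le_abs_of_norm_le (μ := volume) (a := a) (b := b)
      (f := fun q => (g (u r) - g (u q)) / (r - q) ^ (1 + α))
      (g := fun q => K * (q ^ (-β) * (r - q) ^ (β - 1 - α)))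
      (by
        rw [Set.uIoc_of_le hab, ae_restrict_iff' measurableSet_Ioc]
        refine ae_of_all _ fun q hq => ?_
        rw [Real.norm_eq_abs]
        exact hbnd r hr q ⟨lt_of_le_of_lt ha hq.1, le_trans hq.2 hb⟩)
      (hφab.const_mul K)
    rw [intervalIntegral.integral_const_mul, abs_of_nonneg (mul_nonneg hK0 hintnn),
      Real.norm_eq_abs] at hb'
    exact hb'
  -- monotonicity of the φ-integral in its endpoint
  have hφmono : ∀ r : ℝ, 0 < r → ∀ b : ℝ, 0 ≤ b → b ≤ r →
      (∫ q in (0:ℝ)..b, q ^ (-β) * (r - q) ^ (β - 1 - α))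
        ≤ ∫ q in (0:ℝ)..r, q ^ (-β) * (r - q) ^ (β - 1 - α) := by
    intro r hr b hb0 hbr
    have h1 := integral_add_adjacent_intervals
      (hφsub r hr 0 b le_rfl hb0 hbr) (hφsub r hr b r hb0 hbr le_rfl)
    have h2 : 0 ≤ ∫ q in b..r, q ^ (-β) * (r - q) ^ (β - 1 - α) :=
      intervalIntegral.integral_nonneg hbr fun x hx =>
        mul_nonneg (Real.rpow_nonneg (le_trans hb0 hx.1) _)
          (Real.rpow_nonneg (by linarith [hx.2] : (0:ℝ) ≤ r - x) _)
    linarith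
  have hφtot : ∀ r : ℝ, 0 < r →
      (∫ q in (0:ℝ)..r, q ^ (-β) * (r - q) ^ (β - 1 - α)) ≤ Cφ * r ^ (-α) := by
    intro r hr
    have h := aux_phi_bound hα0 hαβ hβ1 hr
    rw [← hCφdef] at h
    exact h
  -- bound on ψ₀
  have hpsi0 : ∀ r ∈ Ioc (0:ℝ) t, |psiZero α g u r| ≤ K * (Cφ * r ^ (-α)) := by
    intro r hr
    have h1 : |psiZero α g u r|
        ≤ K * ∫ q in (0:ℝ)..r, q ^ (-β) * (r - q) ^ (β - 1 - α) := by
      simp only [psiZero]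
      exact hAbs r hr 0 r le_rfl hr.1.le le_rfl
    exact h1.trans (mul_le_mul_of_nonneg_left (hφtot r hr.1) hK0)
  -- bound on ψ_ε when ε < r
  have hpsiE1 : ∀ ε : ℝ, 0 < ε → ∀ r ∈ Ioc (0:ℝ) t, ε < r →
      |psiEps α g u ε r| ≤ K * (Cφ * r ^ (-α)) := by
    intro ε hε r hr hεr
    simp only [psiEps, if_pos hεr]
    refine le_trans (hAbs r hr 0 (r - ε) le_rfl (by linarith) (by linarith)) ?_
    refine le_trans (mul_le_mul_of_nonneg_left
      (hφmono r hr.1 (r - ε) (by linarith) (by linarith)) hK0) ?_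
    exact mul_le_mul_of_nonneg_left (hφtot r hr.1) hK0
  -- bound on ψ_ε when r ≤ ε
  have hpsiE2 : ∀ ε : ℝ, 0 < ε → ∀ r ∈ Ioc (0:ℝ) t, r ≤ ε →
      |psiEps α g u ε r| ≤ C0 / α * r ^ (-α) := by
    intro ε hε r hr hrε
    simp only [psiEps, if_neg (not_lt.mpr hrε)]
    rw [abs_mul, abs_div]
    have h1 : |ε ^ (-α) - r ^ (-α)| ≤ r ^ (-α) := by
      rw [abs_sub_comm, abs_of_nonneg (sub_nonneg.mpr
        (Real.rpow_le_rpow_of_nonpos hr.1 hrε (by linarith)))]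
      have h2 : 0 ≤ ε ^ (-α) := Real.rpow_nonneg hε.le _
      linarith
    have hgb : |g (u r)| ≤ C0 := by
      have h3 := hC0 r ⟨hr.1.le, hr.2⟩
      rwa [Function.comp_apply, Real.norm_eq_abs] at h3
    have h2 : |g (u r)| / |α| ≤ C0 / α := by
      rw [abs_of_pos hα0]
      gcongr
    exact mul_le_mul h2 h1 (abs_nonneg _) (div_nonneg hC00 hα0.le)
  -- main estimate for 2ε < r
  have hcase2 : ∀ ε : ℝ, 0 < ε → ∀ r ∈ Ioc (0:ℝ) t, 2 * ε < r →
      |psiEps α g u ε r - psiZero α g u r|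
        ≤ K * 2 ^ β / (β - α) * ε ^ (β - α) * r ^ (-β) := by
    intro ε hε r hr h2ε
    have hr0 := hr.1
    have hεr : ε < r := by linarith
    have hre0 : (0:ℝ) ≤ r - ε := by linarith
    simp only [psiEps, psiZero, if_pos hεr]
    have hsplit := integral_add_adjacent_intervals
      (hIntH r hr 0 (r - ε) le_rfl hre0 (by linarith))
      (hIntH r hr (r - ε) r hre0 (by linarith) le_rfl)
    have hdiff : (∫ q in (0:ℝ)..(r - ε), (g (u r) - g (u q)) / (r - q) ^ (1 + α))
        - (∫ q in (0:ℝ)..r, (g (u r) - g (u q)) / (r - q) ^ (1 + α))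
        = -(∫ q in (r - ε)..r, (g (u r) - g (u q)) / (r - q) ^ (1 + α)) := by
      linarith [hsplit]
    rw [hdiff, abs_neg]
    refine le_trans (hAbs r hr (r - ε) r hre0 (by linarith) le_rfl) ?_
    have hmid : (∫ q in (r - ε)..r, q ^ (-β) * (r - q) ^ (β - 1 - α))
        ≤ (r / 2) ^ (-β) * (ε ^ (β - α) / (β - α)) := by
      have hφab := hφsub r hr0 (r - ε) r hre0 (by linarith) le_rfl
      have hmaj : IntervalIntegrable
          (fun q : ℝ => (r / 2) ^ (-β) * (r - q) ^ (β - 1 - α)) volume (r - ε) r := by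
        have base : IntervalIntegrable (fun x : ℝ => x ^ (β - 1 - α)) volume ε 0 :=
          intervalIntegrable_rpow' hc1
        have b2 := base.comp_sub_left r
        simp only [sub_zero] at b2
        exact b2.const_mul _
      have hle := integral_mono_on (by linarith : r - ε ≤ r) hφab hmaj (by
        intro x hx
        have hx1 : r / 2 ≤ x := by have := hx.1; linarith
        exact mul_le_mul_of_nonneg_right
          (Real.rpow_le_rpow_of_nonpos (by linarith) hx1 (by linarith))
          (Real.rpow_nonneg (by linarith [hx.2] : (0:ℝ) ≤ r - x) _))
      refine le_trans hle (le_of_eq ?_)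
      rw [intervalIntegral.integral_const_mul, aux_int_rpow_sub hc1 r _ _, sub_self,
        Real.zero_rpow (ne_of_gt (by linarith : (0:ℝ) < β - 1 - α + 1)),
        show r - (r - ε) = ε by ring, sub_zero, show β - 1 - α + 1 = β - α by ring]
    have hhalf : (r / 2 : ℝ) ^ (-β) = 2 ^ β * r ^ (-β) := by
      rw [div_eq_mul_inv, Real.mul_rpow hr0.le (by norm_num),
        Real.inv_rpow (by norm_num), ← Real.rpow_neg (by norm_num), neg_neg, mul_comm]
    calc K * ∫ q in (r - ε)..r, q ^ (-β) * (r - q) ^ (β - 1 - α)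
        ≤ K * ((r / 2) ^ (-β) * (ε ^ (β - α) / (β - α))) :=
          mul_le_mul_of_nonneg_left hmid hK0
      _ = K * 2 ^ β / (β - α) * ε ^ (β - α) * r ^ (-β) := by rw [hhalf]; ring
  -- constants
  set Kb : ℝ := C0 / α + 2 * (K * Cφ) with hKbdef
  have hKb0 : 0 ≤ Kb :=
    add_nonneg (div_nonneg hC00 hα0.le)
      (mul_nonneg (by norm_num) (mul_nonneg hK0 hCφ0))
  set Cc : ℝ := K * 2 ^ β / (β - α) with hCcdef
  have hCc0 : 0 ≤ Cc :=
    div_nonneg (mul_nonneg hK0 (Real.rpow_nonneg (by norm_num) _)) hβα.le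
  -- pointwise domination
  have hptw : ∀ ε ∈ Ioo (0:ℝ) (t / 2), ∀ r ∈ Ioc (0:ℝ) t,
      |psiEps α g u ε r - psiZero α g u r| ^ p
        ≤ if r ≤ 2 * ε then Kb ^ p * r ^ (-(p * α))
          else (Cc * ε ^ (β - α)) ^ p * r ^ (-(p * β)) := by
    intro ε hε r hr
    by_cases hle : r ≤ 2 * ε
    · rw [if_pos hle]
      have hrnn : (0:ℝ) ≤ r ^ (-α) := Real.rpow_nonneg hr.1.le _
      have habs : |psiEps α g u ε r - psiZero α g u r| ≤ Kb * r ^ (-α) := by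
        refine le_trans (abs_sub _ _) ?_
        by_cases h2 : ε < r
        · have e1 := hpsiE1 ε hε.1 r hr h2
          have e0 := hpsi0 r hr
          have hx : 0 ≤ C0 / α * r ^ (-α) :=
            mul_nonneg (div_nonneg hC00 hα0.le) hrnn
          calc |psiEps α g u ε r| + |psiZero α g u r|
              ≤ K * (Cφ * r ^ (-α)) + K * (Cφ * r ^ (-α)) := add_le_add e1 e0
            _ ≤ Kb * r ^ (-α) := by rw [hKbdef]; nlinarith
        · push_neg at h2
          have e1 := hpsiE2 ε hε.1 r hr h2
          have e0 := hpsi0 r hr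
          have hx : 0 ≤ K * Cφ * r ^ (-α) :=
            mul_nonneg (mul_nonneg hK0 hCφ0) hrnn
          calc |psiEps α g u ε r| + |psiZero α g u r|
              ≤ C0 / α * r ^ (-α) + K * (Cφ * r ^ (-α)) := add_le_add e1 e0
            _ ≤ Kb * r ^ (-α) := by rw [hKbdef]; nlinarith
      calc |psiEps α g u ε r - psiZero α g u r| ^ p
          ≤ (Kb * r ^ (-α)) ^ p := Real.rpow_le_rpow (abs_nonneg _) habs hp0.le
        _ = Kb ^ p * r ^ (-(p * α)) := by
            rw [Real.mul_rpow hKb0 hrnn, ← Real.rpow_mul hr.1.le,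
              show -α * p = -(p * α) by ring]
    · rw [if_neg hle]; push_neg at hle
      have habs := hcase2 ε hε.1 r hr hle
      have hnn : 0 ≤ Cc * ε ^ (β - α) :=
        mul_nonneg hCc0 (Real.rpow_nonneg hε.1.le _)
      calc |psiEps α g u ε r - psiZero α g u r| ^ p
          ≤ (Cc * ε ^ (β - α) * r ^ (-β)) ^ p :=
            Real.rpow_le_rpow (abs_nonneg _) habs hp0.le
        _ = (Cc * ε ^ (β - α)) ^ p * r ^ (-(p * β)) := by
            rw [Real.mul_rpow hnn (Real.rpow_nonneg hr.1.le _),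
              ← Real.rpow_mul hr.1.le, show -β * p = -(p * β) by ring]
  -- the key integral estimate
  have key : ∀ ε ∈ Ioo (0:ℝ) (t / 2),
      (∫ r in (0:ℝ)..t, |psiEps α g u ε r - psiZero α g u r| ^ p)
        ≤ Kb ^ p * ((2 * ε) ^ (1 - p * α) / (1 - p * α))
          + (Cc * ε ^ (β - α)) ^ p * (t ^ (1 - p * β) / (1 - p * β)) := by
    intro ε hε
    have hε0 := hε.1
    have h2εt : 2 * ε < t := by linarith [hε.2]
    have h2ε0 : (0:ℝ) < 2 * ε := by linarith
    set D2 : ℝ := (Cc * ε ^ (β - α)) ^ p with hD2def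
    have hD20 : 0 ≤ D2 :=
      Real.rpow_nonneg (mul_nonneg hCc0 (Real.rpow_nonneg hε0.le _)) _
    have hKbp : 0 ≤ Kb ^ p := Real.rpow_nonneg hKb0 _
    set G : ℝ → ℝ := fun r =>
      if r ≤ 2 * ε then Kb ^ p * r ^ (-(p * α)) else D2 * r ^ (-(p * β)) with hGdef
    have hGmeas : Measurable G := by
      apply Measurable.ite (measurableSet_le measurable_id measurable_const) <;> fun_prop
    have i1 : IntegrableOn (fun r : ℝ => r ^ (-(p * α))) (Ioc 0 t) volume :=
      (intervalIntegrable_iff_integrableOn_Ioc_of_le ht.le).mp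
        (intervalIntegrable_rpow' (by linarith))
    have i2 : IntegrableOn (fun r : ℝ => r ^ (-(p * β))) (Ioc 0 t) volume :=
      (intervalIntegrable_iff_integrableOn_Ioc_of_le ht.le).mp
        (intervalIntegrable_rpow' (by linarith))
    have hGnn : ∀ r ∈ Ioc (0:ℝ) t, 0 ≤ G r := by
      intro r hr
      rw [hGdef]
      dsimp only
      split
      · exact mul_nonneg hKbp (Real.rpow_nonneg hr.1.le _)
      · exact mul_nonneg hD20 (Real.rpow_nonneg hr.1.le _)
    have hGint : IntegrableOn G (Ioc 0 t) volume := by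
      apply Integrable.mono' ((i1.const_mul (Kb ^ p)).add (i2.const_mul D2))
        hGmeas.aestronglyMeasurable
      rw [ae_restrict_iff' measurableSet_Ioc]
      refine ae_of_all _ fun r hr => ?_
      have n1 : 0 ≤ Kb ^ p * r ^ (-(p * α)) :=
        mul_nonneg hKbp (Real.rpow_nonneg hr.1.le _)
      have n2 : 0 ≤ D2 * r ^ (-(p * β)) :=
        mul_nonneg hD20 (Real.rpow_nonneg hr.1.le _)
      rw [Real.norm_eq_abs, abs_of_nonneg (hGnn r hr)]
      simp only [hGdef, Pi.add_apply]
      split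
      · linarith
      · linarith
    have step1 : (∫ r in (0:ℝ)..t, |psiEps α g u ε r - psiZero α g u r| ^ p)
        ≤ ∫ r in Ioc (0:ℝ) t, G r := by
      rw [intervalIntegral.integral_of_le ht.le]
      apply integral_mono_of_nonneg
        (ae_of_all _ fun r => Real.rpow_nonneg (abs_nonneg _) _) hGint
      filter_upwards [ae_restrict_mem measurableSet_Ioc] with r hr
      simp only [hGdef]
      exact hptw ε hε r hr
    have hsets : Ioc (0:ℝ) (2 * ε) ∪ Ioc (2 * ε) t = Ioc 0 t :=
      Ioc_union_Ioc_eq_Ioc h2ε0.le h2εt.le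
    have step2 : (∫ r in Ioc (0:ℝ) t, G r)
        = (∫ r in Ioc (0:ℝ) (2 * ε), G r) + ∫ r in Ioc (2 * ε) t, G r := by
      rw [← hsets]
      exact setIntegral_union (Ioc_disjoint_Ioc_of_le le_rfl) measurableSet_Ioc
        (hGint.mono_set (Ioc_subset_Ioc le_rfl h2εt.le))
        (hGint.mono_set (Ioc_subset_Ioc h2ε0.le le_rfl))
    have pieceA : (∫ r in Ioc (0:ℝ) (2 * ε), G r)
        = Kb ^ p * ((2 * ε) ^ (1 - p * α) / (1 - p * α)) := by
      have heq : EqOn G (fun r => Kb ^ p * r ^ (-(p * α))) (Ioc 0 (2 * ε)) :=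
        fun r hr => by rw [hGdef]; exact if_pos hr.2
      rw [setIntegral_congr_fun measurableSet_Ioc heq,
        ← intervalIntegral.integral_of_le h2ε0.le,
        intervalIntegral.integral_const_mul, integral_rpow (Or.inl (by linarith)),
        Real.zero_rpow (by linarith : -(p * α) + 1 ≠ 0), sub_zero,
        show -(p * α) + 1 = 1 - p * α by ring]
    have pieceB : (∫ r in Ioc (2 * ε) t, G r) ≤ D2 * (t ^ (1 - p * β) / (1 - p * β)) := by
      have heq : EqOn G (fun r => D2 * r ^ (-(p * β))) (Ioc (2 * ε) t) :=
        fun r hr => by rw [hGdef]; exact if_neg (not_le.mpr hr.1)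
      rw [setIntegral_congr_fun measurableSet_Ioc heq,
        ← intervalIntegral.integral_of_le h2εt.le,
        intervalIntegral.integral_const_mul, integral_rpow (Or.inl (by linarith)),
        show -(p * β) + 1 = 1 - p * β by ring]
      exact mul_le_mul_of_nonneg_left
        ((div_le_div_iff_of_pos_right h1pβ).mpr (sub_le_self _ (Real.rpow_nonneg h2ε0.le _))) hD20
    calc (∫ r in (0:ℝ)..t, |psiEps α g u ε r - psiZero α g u r| ^ p)
        ≤ ∫ r in Ioc (0:ℝ) t, G r := step1
      _ = _ + _ := step2
      _ ≤ Kb ^ p * ((2 * ε) ^ (1 - p * α) / (1 - p * α))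
          + (Cc * ε ^ (β - α)) ^ p * (t ^ (1 - p * β) / (1 - p * β)) := by
          rw [pieceA, ← hD2def]
          exact add_le_add le_rfl pieceB
  -- conclusion by squeezing
  apply squeeze_zero' (Filter.Eventually.of_forall fun ε =>
      intervalIntegral.integral_nonneg ht.le fun r _ =>
        Real.rpow_nonneg (abs_nonneg _) _)
    (Filter.eventually_of_mem (Ioo_mem_nhdsGT_of_mem ⟨le_rfl, by linarith⟩)
      fun ε hε => key ε hε)
  have t0 : Filter.Tendsto (fun ε : ℝ => ε) (nhdsWithin 0 (Ioi 0)) (nhds 0) :=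
    Filter.tendsto_id.mono_left nhdsWithin_le_nhds
  have T1 : Filter.Tendsto (fun ε : ℝ => Kb ^ p * ((2 * ε) ^ (1 - p * α) / (1 - p * α)))
      (nhdsWithin 0 (Ioi 0)) (nhds 0) := by
    have h1 : Filter.Tendsto (fun ε : ℝ => 2 * ε) (nhdsWithin 0 (Ioi 0)) (nhds 0) := by
      simpa using t0.const_mul (2:ℝ)
    have h2 : Filter.Tendsto (fun ε : ℝ => (2 * ε) ^ (1 - p * α))
        (nhdsWithin 0 (Ioi 0)) (nhds 0) := by
      have h3 := h1.rpow_const (Or.inr h1pα.le)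
      simpa [Real.zero_rpow (ne_of_gt h1pα)] using h3
    have h4 := (h2.div_const (1 - p * α)).const_mul (Kb ^ p)
    simpa using h4
  have T2 : Filter.Tendsto
      (fun ε : ℝ => (Cc * ε ^ (β - α)) ^ p * (t ^ (1 - p * β) / (1 - p * β)))
      (nhdsWithin 0 (Ioi 0)) (nhds 0) := by
    have h1 : Filter.Tendsto (fun ε : ℝ => ε ^ (β - α)) (nhdsWithin 0 (Ioi 0)) (nhds 0) := by
      have h3 := t0.rpow_const (Or.inr hβα.le)
      simpa [Real.zero_rpow (ne_of_gt hβα)] using h3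
    have h2 : Filter.Tendsto (fun ε : ℝ => Cc * ε ^ (β - α))
        (nhdsWithin 0 (Ioi 0)) (nhds 0) := by
      simpa using h1.const_mul Cc
    have h3 : Filter.Tendsto (fun ε : ℝ => (Cc * ε ^ (β - α)) ^ p)
        (nhdsWithin 0 (Ioi 0)) (nhds 0) := by
      have h4 := h2.rpow_const (Or.inr hp0.le)
      simpa [Real.zero_rpow (ne_of_gt hp0)] using h4
    simpa using h3.mul_const (t ^ (1 - p * β) / (1 - p * β))
  simpa using T1.add T2
end

section
/- Let a > −1, b > −1, a + b ≥ −1, d > 0 and T > 0. For ρ > 0 define K(ρ) = sup_{t∈[0,T]} t^d ∫_0^1 e^{−ρ t (1−v)} v^a (1−v)^b dv. Then the integrals are finite and lim_{ρ→∞} K(ρ) = 0. -/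
open Set MeasureTheory

private lemma key_exp_bound {t s d : ℝ} (ht : 0 ≤ t) (hs : 0 < s) (hd : 0 < d) :
    t ^ d * Real.exp (-(s * t)) ≤ (d / s) ^ d := by
  have hx : 0 ≤ s * t := mul_nonneg hs.le ht
  have hy : s * t / d ≤ Real.exp (s * t / d) := by
    linarith [Real.add_one_le_exp (s * t / d)]
  have h1 : s * t ≤ d * Real.exp (s * t / d) := by
    calc s * t = d * (s * t / d) := by field_simp
    _ ≤ d * Real.exp (s * t / d) := mul_le_mul_of_nonneg_left hy hd.le
  have h2 : (s * t) ^ d ≤ d ^ d * Real.exp (s * t) := by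
    calc (s * t) ^ d ≤ (d * Real.exp (s * t / d)) ^ d := Real.rpow_le_rpow hx h1 hd.le
    _ = d ^ d * Real.exp (s * t / d) ^ d := Real.mul_rpow hd.le (Real.exp_pos _).le
    _ = d ^ d * Real.exp (s * t) := by rw [← Real.exp_mul, div_mul_cancel₀ _ hd.ne']
  have htd : t ^ d = (s * t) ^ d / s ^ d := by
    rw [← Real.div_rpow hx hs.le, mul_div_cancel_left₀ _ hs.ne']
  rw [htd, Real.div_rpow hd.le hs.le, div_mul_eq_mul_div]
  gcongr
  rw [Real.exp_neg, mul_inv_le_iff₀ (Real.exp_pos _)]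
  linarith [h2]

private lemma beta_integrable' {a b : ℝ} (ha : -1 < a) (hb : -1 < b) :
    IntervalIntegrable (fun v : ℝ => v ^ a * (1 - v) ^ b) volume 0 1 := by
  have h1 : IntervalIntegrable (fun v : ℝ => v ^ a * (1 - v) ^ b) volume 0 (1/2) := by
    apply (intervalIntegral.intervalIntegrable_rpow' ha).mul_continuousOn
    apply ContinuousOn.rpow_const (by fun_prop)
    intro x hx
    rw [uIcc_of_le (by norm_num)] at hx
    exact Or.inl (ne_of_gt (by linarith [hx.2] : (0:ℝ) < 1 - x))
  have h2 : IntervalIntegrable (fun v : ℝ => v ^ a * (1 - v) ^ b) volume (1/2) 1 := by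
    have hcomp : IntervalIntegrable (fun v : ℝ => (1 - v) ^ b) volume (1/2) 1 := by
      have := (intervalIntegral.intervalIntegrable_rpow' hb (a := 0) (b := 1/2)).comp_sub_left 1
      norm_num at this
      exact this.symm
    apply hcomp.continuousOn_mul
    apply ContinuousOn.rpow_const (by fun_prop)
    intro x hx
    rw [uIcc_of_le (by norm_num)] at hx
    exact Or.inl (ne_of_gt (by linarith [hx.1] : (0:ℝ) < x))
  exact h1.trans h2

private lemma exp_beta_integrable' {a b : ℝ} (ha : -1 < a) (hb : -1 < b) (ρ t : ℝ) :
    IntervalIntegrable (fun v => Real.exp (-ρ * t * (1 - v)) * v ^ a * (1 - v) ^ b)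
      volume 0 1 := by
  have := (beta_integrable' ha hb).continuousOn_mul
    (g := fun v : ℝ => Real.exp (-ρ * t * (1 - v))) (by fun_prop)
  simpa [mul_assoc] using this

private lemma main_bound' {a b d T : ℝ} (ha : -1 < a) (hb : -1 < b) (hd : 0 < d)
    {ρ ε : ℝ} (hρ : 0 < ρ) (hε : 0 < ε) (hε2 : ε ≤ 1/2) {t : ℝ} (ht0 : 0 ≤ t) (htT : t ≤ T) :
    t ^ d * ∫ v in (0:ℝ)..1, Real.exp (-ρ * t * (1 - v)) * v ^ a * (1 - v) ^ b
      ≤ (∫ v in (0:ℝ)..1, v ^ a * (1 - v) ^ b) * (d / (ρ * ε)) ^ d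
        + T ^ d * (max 1 ((2:ℝ)⁻¹ ^ a) * (ε ^ (b + 1) / (b + 1))) := by
  set Ca : ℝ := max 1 ((2:ℝ)⁻¹ ^ a) with hCa
  have hε1 : ε ≤ 1 := by linarith
  have hmem1 : (1 - ε) ∈ uIcc (0:ℝ) 1 := by
    rw [uIcc_of_le (by norm_num)]; constructor <;> linarith
  have hbint := beta_integrable' ha hb
  have hint := exp_beta_integrable' ha hb ρ t
  have hint1 : IntervalIntegrable (fun v => Real.exp (-ρ * t * (1 - v)) * v ^ a * (1 - v) ^ b)
      volume 0 (1 - ε) := hint.mono_set (uIcc_subset_uIcc left_mem_uIcc hmem1)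
  have hint2 : IntervalIntegrable (fun v => Real.exp (-ρ * t * (1 - v)) * v ^ a * (1 - v) ^ b)
      volume (1 - ε) 1 := hint.mono_set (uIcc_subset_uIcc hmem1 right_mem_uIcc)
  have hbint1 : IntervalIntegrable (fun v : ℝ => v ^ a * (1 - v) ^ b) volume 0 (1 - ε) :=
    hbint.mono_set (uIcc_subset_uIcc left_mem_uIcc hmem1)
  have hbint2 : IntervalIntegrable (fun v : ℝ => v ^ a * (1 - v) ^ b) volume (1 - ε) 1 :=
    hbint.mono_set (uIcc_subset_uIcc hmem1 right_mem_uIcc)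
  have hsplit := intervalIntegral.integral_add_adjacent_intervals hint1 hint2
  have hone : IntervalIntegrable (fun v : ℝ => (1 - v) ^ b) volume (1 - ε) 1 := by
    have := (intervalIntegral.intervalIntegrable_rpow' hb (a := 0) (b := ε)).comp_sub_left 1
    norm_num at this
    exact this.symm
  have hI1 : (∫ v in (0:ℝ)..(1 - ε), Real.exp (-ρ * t * (1 - v)) * v ^ a * (1 - v) ^ b)
      ≤ Real.exp (-(ρ * ε * t)) * ∫ v in (0:ℝ)..1, v ^ a * (1 - v) ^ b := by
    have step1 : (∫ v in (0:ℝ)..(1 - ε), Real.exp (-ρ * t * (1 - v)) * v ^ a * (1 - v) ^ b)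
        ≤ ∫ v in (0:ℝ)..(1 - ε), Real.exp (-(ρ * ε * t)) * (v ^ a * (1 - v) ^ b) := by
      apply intervalIntegral.integral_mono_on (by linarith) hint1 (hbint1.const_mul _)
      intro v hv
      have hva : (0:ℝ) ≤ v ^ a := Real.rpow_nonneg hv.1 a
      have hvb : (0:ℝ) ≤ (1 - v) ^ b := Real.rpow_nonneg (by linarith [hv.2]) b
      have hexp : Real.exp (-ρ * t * (1 - v)) ≤ Real.exp (-(ρ * ε * t)) := by
        apply Real.exp_le_exp.mpr
        have h1v : ε ≤ 1 - v := by linarith [hv.2]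
        nlinarith [mul_nonneg hρ.le ht0]
      calc Real.exp (-ρ * t * (1 - v)) * v ^ a * (1 - v) ^ b
          ≤ Real.exp (-(ρ * ε * t)) * v ^ a * (1 - v) ^ b := by gcongr
        _ = Real.exp (-(ρ * ε * t)) * (v ^ a * (1 - v) ^ b) := by ring
    have step2 : (∫ v in (0:ℝ)..(1 - ε), Real.exp (-(ρ * ε * t)) * (v ^ a * (1 - v) ^ b))
        = Real.exp (-(ρ * ε * t)) * ∫ v in (0:ℝ)..(1 - ε), v ^ a * (1 - v) ^ b :=
      intervalIntegral.integral_const_mul _ _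
    have step3 : (∫ v in (0:ℝ)..(1 - ε), v ^ a * (1 - v) ^ b)
        ≤ ∫ v in (0:ℝ)..1, v ^ a * (1 - v) ^ b := by
      rw [← intervalIntegral.integral_add_adjacent_intervals hbint1 hbint2]
      have : 0 ≤ ∫ v in (1 - ε)..1, v ^ a * (1 - v) ^ b := by
        apply intervalIntegral.integral_nonneg (by linarith)
        intro v hv
        exact mul_nonneg (Real.rpow_nonneg (by linarith [hv.1]) a)
          (Real.rpow_nonneg (by linarith [hv.2]) b)
      linarith
    calc (∫ v in (0:ℝ)..(1 - ε), Real.exp (-ρ * t * (1 - v)) * v ^ a * (1 - v) ^ b)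
        ≤ ∫ v in (0:ℝ)..(1 - ε), Real.exp (-(ρ * ε * t)) * (v ^ a * (1 - v) ^ b) := step1
      _ = Real.exp (-(ρ * ε * t)) * ∫ v in (0:ℝ)..(1 - ε), v ^ a * (1 - v) ^ b := step2
      _ ≤ Real.exp (-(ρ * ε * t)) * ∫ v in (0:ℝ)..1, v ^ a * (1 - v) ^ b :=
          mul_le_mul_of_nonneg_left step3 (Real.exp_pos _).le
  have hI2 : (∫ v in (1 - ε:ℝ)..1, Real.exp (-ρ * t * (1 - v)) * v ^ a * (1 - v) ^ b)
      ≤ Ca * (ε ^ (b + 1) / (b + 1)) := by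
    have step1 : (∫ v in (1 - ε:ℝ)..1, Real.exp (-ρ * t * (1 - v)) * v ^ a * (1 - v) ^ b)
        ≤ ∫ v in (1 - ε:ℝ)..1, Ca * (1 - v) ^ b := by
      apply intervalIntegral.integral_mono_on (by linarith) hint2 (hone.const_mul _)
      intro v hv
      have hv0 : (0:ℝ) < v := by linarith [hv.1]
      have hvb : (0:ℝ) ≤ (1 - v) ^ b := Real.rpow_nonneg (by linarith [hv.2]) b
      have hexp : Real.exp (-ρ * t * (1 - v)) ≤ 1 := by
        apply Real.exp_le_one_iff.mpr
        nlinarith [mul_nonneg hρ.le ht0, hv.2]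
      have hva : v ^ a ≤ Ca := by
        rcases le_or_gt 0 a with h | h
        · exact le_trans (Real.rpow_le_one hv0.le (by linarith [hv.2]) h) (le_max_left _ _)
        · refine le_trans ?_ (le_max_right _ _)
          exact Real.rpow_le_rpow_of_nonpos (by norm_num) (by linarith [hv.1]) h.le
      have h1 : Real.exp (-ρ * t * (1 - v)) * v ^ a ≤ Ca := by
        calc Real.exp (-ρ * t * (1 - v)) * v ^ a ≤ 1 * Ca :=
          mul_le_mul hexp hva (Real.rpow_nonneg hv0.le a) zero_le_one
        _ = Ca := one_mul _
      exact mul_le_mul_of_nonneg_right h1 hvb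
    have step2 : (∫ v in (1 - ε:ℝ)..1, Ca * (1 - v) ^ b) = Ca * (ε ^ (b + 1) / (b + 1)) := by
      rw [intervalIntegral.integral_const_mul]
      congr 1
      rw [intervalIntegral.integral_comp_sub_left (fun u : ℝ => u ^ b) 1]
      norm_num
      rw [integral_rpow (Or.inl hb)]
      rw [Real.zero_rpow (by linarith : b + 1 ≠ 0)]
      ring
    exact le_trans step1 (le_of_eq step2)
  have htd : (0:ℝ) ≤ t ^ d := Real.rpow_nonneg ht0 d
  have hB : (0:ℝ) ≤ ∫ v in (0:ℝ)..1, v ^ a * (1 - v) ^ b := by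
    apply intervalIntegral.integral_nonneg (by norm_num)
    intro v hv
    exact mul_nonneg (Real.rpow_nonneg hv.1 a) (Real.rpow_nonneg (by linarith [hv.2]) b)
  have hCa0 : (0:ℝ) ≤ Ca := le_trans zero_le_one (le_max_left _ _)
  have hkey : t ^ d * Real.exp (-(ρ * ε * t)) ≤ (d / (ρ * ε)) ^ d := by
    have := key_exp_bound (t := t) (s := ρ * ε) ht0 (mul_pos hρ hε) hd
    simpa [mul_comm, mul_assoc] using this
  rw [← hsplit, mul_add]
  have hterm1 : t ^ d * (∫ v in (0:ℝ)..(1 - ε), Real.exp (-ρ * t * (1 - v)) * v ^ a * (1 - v) ^ b)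
      ≤ (∫ v in (0:ℝ)..1, v ^ a * (1 - v) ^ b) * (d / (ρ * ε)) ^ d := by
    calc t ^ d * (∫ v in (0:ℝ)..(1 - ε), Real.exp (-ρ * t * (1 - v)) * v ^ a * (1 - v) ^ b)
        ≤ t ^ d * (Real.exp (-(ρ * ε * t)) * ∫ v in (0:ℝ)..1, v ^ a * (1 - v) ^ b) :=
          mul_le_mul_of_nonneg_left hI1 htd
      _ = (t ^ d * Real.exp (-(ρ * ε * t))) * ∫ v in (0:ℝ)..1, v ^ a * (1 - v) ^ b := by ring
      _ ≤ (d / (ρ * ε)) ^ d * ∫ v in (0:ℝ)..1, v ^ a * (1 - v) ^ b :=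
          mul_le_mul_of_nonneg_right hkey hB
      _ = (∫ v in (0:ℝ)..1, v ^ a * (1 - v) ^ b) * (d / (ρ * ε)) ^ d := by ring
  have hterm2 : t ^ d * (∫ v in (1 - ε:ℝ)..1, Real.exp (-ρ * t * (1 - v)) * v ^ a * (1 - v) ^ b)
      ≤ T ^ d * (Ca * (ε ^ (b + 1) / (b + 1))) := by
    have hbd : (0:ℝ) ≤ Ca * (ε ^ (b + 1) / (b + 1)) :=
      mul_nonneg hCa0 (div_nonneg (Real.rpow_nonneg hε.le _) (by linarith))
    calc t ^ d * (∫ v in (1 - ε:ℝ)..1, Real.exp (-ρ * t * (1 - v)) * v ^ a * (1 - v) ^ b)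
        ≤ t ^ d * (Ca * (ε ^ (b + 1) / (b + 1))) := mul_le_mul_of_nonneg_left hI2 htd
      _ ≤ T ^ d * (Ca * (ε ^ (b + 1) / (b + 1))) :=
          mul_le_mul_of_nonneg_right (Real.rpow_le_rpow ht0 htT hd.le) hbd
  linarith

/-- `K(ρ) = sup_{t∈[0,T]} t^d ∫_0^1 e^{−ρt(1−v)} v^a (1−v)^b dv`. -/
noncomputable def Kfun (a b d T ρ : ℝ) : ℝ :=
  ⨆ t : Icc (0:ℝ) T,
    (t : ℝ) ^ d * ∫ v in (0:ℝ)..1, Real.exp (-ρ * (t : ℝ) * (1 - v)) * v ^ a * (1 - v) ^ b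

/-- For `a > −1`, `b > −1`, `a + b ≥ −1`, `d > 0` and `T > 0`, the integrals defining
`K(ρ)` are finite and `lim_{ρ→∞} K(ρ) = 0`. -/
theorem Kfun_tendsto_zero {a b d T : ℝ} (ha : -1 < a) (hb : -1 < b)
    (hab : -1 ≤ a + b) (hd : 0 < d) (hT : 0 < T) :
    (∀ ρ > (0:ℝ), ∀ t ∈ Icc (0:ℝ) T,
      IntervalIntegrable (fun v => Real.exp (-ρ * t * (1 - v)) * v ^ a * (1 - v) ^ b)
        volume 0 1) ∧
    Filter.Tendsto (fun ρ => Kfun a b d T ρ) Filter.atTop (nhds 0) := by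
  refine ⟨fun ρ _ t _ => exp_beta_integrable' ha hb ρ t, ?_⟩
  set B : ℝ := ∫ v in (0:ℝ)..1, v ^ a * (1 - v) ^ b with hB
  set Ca : ℝ := max 1 ((2:ℝ)⁻¹ ^ a) with hCa
  set G : ℝ → ℝ := fun ρ =>
    B * (d / (ρ * ρ ^ (-(1/2) : ℝ))) ^ d
      + T ^ d * (Ca * ((ρ ^ (-(1/2) : ℝ)) ^ (b + 1) / (b + 1))) with hG
  haveI : Nonempty (Icc (0:ℝ) T) := ⟨⟨0, le_refl _, hT.le⟩⟩
  have hεlem : ∀ ρ : ℝ, (4:ℝ) ≤ ρ → 0 < ρ ∧ 0 < ρ ^ (-(1/2):ℝ) ∧ ρ ^ (-(1/2):ℝ) ≤ 1/2 := by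
    intro ρ hρ
    have hρ0 : (0:ℝ) < ρ := by linarith
    refine ⟨hρ0, Real.rpow_pos_of_pos hρ0 _, ?_⟩
    have h4 : ρ ^ (-(1/2):ℝ) ≤ (4:ℝ) ^ (-(1/2):ℝ) :=
      Real.rpow_le_rpow_of_nonpos (by norm_num) hρ (by norm_num)
    have : ((4:ℝ)) ^ (-(1/2):ℝ) = 1/2 := by
      rw [show (4:ℝ) = 2 ^ (2:ℕ) by norm_num, ← Real.rpow_natCast 2 2,
        ← Real.rpow_mul (by norm_num)]
      norm_num
    linarith
  have hub : ∀ᶠ ρ in Filter.atTop, Kfun a b d T ρ ≤ G ρ := by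
    filter_upwards [Filter.eventually_ge_atTop (4:ℝ)] with ρ hρ
    obtain ⟨hρ0, hε0, hε2⟩ := hεlem ρ hρ
    apply ciSup_le
    rintro ⟨t, ht0, htT⟩
    exact main_bound' ha hb hd hρ0 hε0 hε2 ht0 htT
  have hlb : ∀ᶠ ρ in Filter.atTop, 0 ≤ Kfun a b d T ρ := by
    filter_upwards [Filter.eventually_ge_atTop (4:ℝ)] with ρ hρ
    obtain ⟨hρ0, hε0, hε2⟩ := hεlem ρ hρ
    have hbdd : BddAbove (Set.range (fun t : Icc (0:ℝ) T =>
        (t : ℝ) ^ d * ∫ v in (0:ℝ)..1,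
          Real.exp (-ρ * (t:ℝ) * (1 - v)) * v ^ a * (1 - v) ^ b)) := by
      refine ⟨G ρ, ?_⟩
      rintro x ⟨⟨t, ht0, htT⟩, rfl⟩
      exact main_bound' ha hb hd hρ0 hε0 hε2 ht0 htT
    refine le_ciSup_of_le hbdd ⟨0, le_refl _, hT.le⟩ ?_
    rw [Real.zero_rpow hd.ne', zero_mul]
  have hGlim : Filter.Tendsto G Filter.atTop (nhds 0) := by
    have h1 : Filter.Tendsto (fun ρ : ℝ => d / (ρ * ρ ^ (-(1/2):ℝ))) Filter.atTop (nhds 0) := by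
      apply Filter.Tendsto.div_atTop (tendsto_const_nhds)
      have h : Filter.Tendsto (fun ρ : ℝ => ρ ^ ((1:ℝ)/2)) Filter.atTop Filter.atTop :=
        tendsto_rpow_atTop (by norm_num)
      apply h.congr'
      filter_upwards [Filter.eventually_gt_atTop (0:ℝ)] with ρ hρ
      calc ρ ^ ((1:ℝ)/2) = ρ ^ ((1:ℝ) + -(1/2)) := by norm_num
        _ = ρ ^ (1:ℝ) * ρ ^ (-(1/2):ℝ) := Real.rpow_add hρ _ _
        _ = ρ * ρ ^ (-(1/2):ℝ) := by rw [Real.rpow_one]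
    have h1' : Filter.Tendsto (fun ρ : ℝ => (d / (ρ * ρ ^ (-(1/2):ℝ))) ^ d)
        Filter.atTop (nhds 0) := by
      have := h1.rpow_const (Or.inr hd.le)
      rwa [Real.zero_rpow hd.ne'] at this
    have h2 : Filter.Tendsto (fun ρ : ℝ => (ρ ^ (-(1/2):ℝ)) ^ (b + 1))
        Filter.atTop (nhds 0) := by
      have := (tendsto_rpow_neg_atTop (by norm_num : (0:ℝ) < 1/2)).rpow_const
        (Or.inr (by linarith : (0:ℝ) ≤ b + 1))
      rwa [Real.zero_rpow (by linarith : b + 1 ≠ 0)] at this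
    have := (h1'.const_mul B).add (((h2.div_const (b + 1)).const_mul Ca).const_mul (T ^ d))
    rw [hG]
    simpa using this
  exact tendsto_of_tendsto_of_tendsto_of_le_of_le' tendsto_const_nhds hGlim hlb hub
end
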